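/- arXiv:1310.2680 — 7 statements merged into one kernel-verified Lean document; each statement's English description precedes it below -/
import Mathlib

section
/- For all real x ≥ 0 and ε ∈ [0,1], one has e^{εx} + e^{-εx} - 2 ≤ ε²(e^x + e^{-x} - 2). -/
open Real Set in
lemma sinh_mul_le_aux (ε u : ℝ) (hu : 0 ≤ u) (hε0 : 0 ≤ ε) (hε1 : ε ≤ 1) :
    Real.sinh (ε * u) ≤ ε * Real.sinh u := by
  have hmono : MonotoneOn (fun t => ε * Real.sinh t - Real.sinh (ε * t)) (Ici (0:ℝ)) := by
    have hderiv : ∀ t : ℝ, HasDerivAt (fun t => ε * Real.sinh t - Real.sinh (ε * t))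
        (ε * Real.cosh t - Real.cosh (ε * t) * ε) t := by
      intro t
      have h2 : HasDerivAt (fun y : ℝ => ε * y) (ε * 1) t := (hasDerivAt_id t).const_mul ε
      have h3 := (Real.hasDerivAt_sinh (ε * t)).comp t h2
      have h4 := ((Real.hasDerivAt_sinh t).const_mul ε).sub h3; rw [mul_one] at h4; exact h4
    apply monotoneOn_of_deriv_nonneg (convex_Ici 0)
    · exact (Continuous.sub (continuous_const.mul Real.continuous_sinh)
        (Real.continuous_sinh.comp (continuous_const.mul continuous_id))).continuousOn
    · intro t _
      exact (hderiv t).differentiableAt.differentiableWithinAt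
    · intro t ht
      rw [(hderiv t).deriv]
      simp only [interior_Ici, mem_Ioi] at ht
      have hc : Real.cosh (ε * t) ≤ Real.cosh t := by
        rw [Real.cosh_le_cosh]
        rw [abs_of_nonneg (mul_nonneg hε0 ht.le), abs_of_nonneg ht.le]
        nlinarith
      nlinarith
  have h0 : (fun t => ε * Real.sinh t - Real.sinh (ε * t)) 0 = 0 := by simp
  have := hmono (self_mem_Ici) (mem_Ici.2 hu) hu
  simp only [Real.sinh_zero, mul_zero, sub_zero] at this
  linarith

theorem exp_cosh_ineq (x ε : ℝ) (hx : 0 ≤ x) (hε0 : 0 ≤ ε) (hε1 : ε ≤ 1) :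
    Real.exp (ε * x) + Real.exp (-(ε * x)) - 2 ≤
      ε ^ 2 * (Real.exp x + Real.exp (-x) - 2) := by
  have key := sinh_mul_le_aux ε (x/2) (by linarith) hε0 hε1
  have h0 : 0 ≤ Real.sinh (ε * (x/2)) :=
    Real.sinh_nonneg_iff.2 (mul_nonneg hε0 (by linarith))
  have h1 : 0 ≤ Real.sinh (x/2) := Real.sinh_nonneg_iff.2 (by linarith)
  have hsq : Real.sinh (ε * (x/2)) ^ 2 ≤ (ε * Real.sinh (x/2)) ^ 2 := by
    apply sq_le_sq' <;> nlinarith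
  have e1 : 2 * Real.sinh (ε * (x/2)) ^ 2 = Real.cosh (2 * (ε * (x/2))) - 1 := by
    rw [Real.cosh_two_mul, Real.cosh_sq]; ring
  have e2 : 2 * Real.sinh (x/2) ^ 2 = Real.cosh (2 * (x/2)) - 1 := by
    rw [Real.cosh_two_mul, Real.cosh_sq]; ring
  have c1 : Real.cosh (2 * (ε * (x/2))) = Real.cosh (ε * x) := by ring_nf
  have c2 : Real.cosh (2 * (x/2)) = Real.cosh x := by ring_nf
  rw [c1] at e1; rw [c2] at e2
  have d1 : Real.cosh (ε * x) = (Real.exp (ε * x) + Real.exp (-(ε * x))) / 2 :=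
    Real.cosh_eq _
  have d2 : Real.cosh x = (Real.exp x + Real.exp (-x)) / 2 := Real.cosh_eq _
  nlinarith [hsq, e1, e2, d1, d2]
end

section
/- Let V be a countable vertex set with positive vertex weights ν and symmetric nonnegative edge weights μ, and let 𝓛f(x) = (1/ν_x) Σ_y (f(y) − f(x)) μ_{xy} be the associated generator. Let I ⊆ [0,∞) be an interval, u : I × V → [0,∞) a positive subsolution of the heat equation (∂u/∂t ≤ 𝓛u on I × V) with finite support in space (uniformly in t), and h : I × V → (0,∞) a function such that for each t ∈ I and each y ∈ V, (1/ν_y) Σ_x [|h(t,x) − h(t,y)|² / (4 h(t,x) h(t,y))] μ_{xy} ≤ −(∂/∂t) log h(t,y). Then the function J(t) = Σ_x u(t,x)² h(t,x) ν_x is non-increasing on I. -/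
private lemma key_ineq (a b p q : ℝ) (ha : 0 ≤ a) (hb : 0 ≤ b) (hp : 0 < p) (hq : 0 < q) :
    2*(a*p)*(b-a) + 2*(b*q)*(a-b) - a^2*p*((q-p)^2/(4*q*p)) - b^2*q*((p-q)^2/(4*p*q)) ≤ 0 := by
  obtain ⟨P, hP, rfl⟩ : ∃ P, 0 < P ∧ P^2 = p := ⟨Real.sqrt p, Real.sqrt_pos.2 hp, Real.sq_sqrt hp.le⟩
  obtain ⟨Q, hQ, rfl⟩ : ∃ Q, 0 < Q ∧ Q^2 = q := ⟨Real.sqrt q, Real.sqrt_pos.2 hq, Real.sq_sqrt hq.le⟩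
  have hab : 0 ≤ a*b*(P*Q) := mul_nonneg (mul_nonneg ha hb) (mul_pos hP hQ).le
  have hT : 0 ≤ (a*P-b*Q)^2*(8*P^2*Q^2+(P^2-Q^2)^2) + 2*(a*b*(P*Q))*(P-Q)^4 :=
    add_nonneg (mul_nonneg (sq_nonneg _) (by positivity)) (by positivity)
  have hid : 2*(a*P^2)*(b-a) + 2*(b*Q^2)*(a-b) - a^2*(P^2)*((Q^2-P^2)^2/(4*Q^2*P^2))
      - b^2*(Q^2)*((P^2-Q^2)^2/(4*P^2*Q^2))
      = -(((a*P-b*Q)^2*(8*P^2*Q^2+(P^2-Q^2)^2) + 2*(a*b*(P*Q))*(P-Q)^4) / (4*P^2*Q^2)) := by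
    field_simp
    ring
  rw [hid]
  exact neg_nonpos.mpr (div_nonneg hT (by positivity))

/-- Integral Maximum Principle for positive subsolutions of the heat equation on a
weighted graph. -/
theorem integral_maximum_principle
    (V : Type*) (μ : V → V → ℝ) (ν : V → ℝ)
    (hμsymm : ∀ x y, μ x y = μ y x) (hμnn : ∀ x y, 0 ≤ μ x y)
    (hν : ∀ x, 0 < ν x) (hloc : ∀ x, {y | μ x y ≠ 0}.Finite)
    (I : Set ℝ) (hI : I.OrdConnected) (hInn : I ⊆ Set.Ici (0 : ℝ))
    (u u' : ℝ → V → ℝ)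
    (hunn : ∀ t ∈ I, ∀ x, 0 ≤ u t x)
    (S : Finset V) (hsupp : ∀ t ∈ I, ∀ x, x ∉ S → u t x = 0)
    (hderiv : ∀ t ∈ I, ∀ x, HasDerivWithinAt (fun s => u s x) (u' t x) I t)
    (hsub : ∀ t ∈ I, ∀ x, u' t x ≤ (∑' y, (u t y - u t x) * μ x y) / ν x)
    (h lh' : ℝ → V → ℝ)
    (hpos : ∀ t ∈ I, ∀ x, 0 < h t x)
    (hlder : ∀ t ∈ I, ∀ y, HasDerivWithinAt (fun s => Real.log (h s y)) (lh' t y) I t)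
    (hF : ∀ t ∈ I, ∀ y,
      (∑' x, |h t x - h t y| ^ 2 / (4 * h t x * h t y) * μ x y) / ν y ≤ - lh' t y) :
    AntitoneOn (fun t => ∑' x, u t x ^ 2 * h t x * ν x) I := by
  classical
  set K : Finset V := S ∪ S.biUnion (fun x => (hloc x).toFinset) with hKdef
  have hSK : S ⊆ K := Finset.subset_union_left
  have hμ0 : ∀ x ∈ S, ∀ y, y ∉ K → μ x y = 0 := by
    intro x hx y hy
    by_contra hne
    exact hy (Finset.mem_union_right _
      (Finset.mem_biUnion.mpr ⟨x, hx, (hloc x).mem_toFinset.mpr hne⟩))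
  set F : ℝ → ℝ := fun t => ∑ x ∈ S, u t x ^ 2 * h t x * ν x with hFdef
  have hJF : ∀ t ∈ I, (∑' x, u t x ^ 2 * h t x * ν x) = F t := by
    intro t ht
    exact tsum_eq_sum (fun x hx => by rw [hsupp t ht x hx]; ring)
  set D : ℝ → ℝ := fun t =>
    ∑ x ∈ S, (2 * u t x * u' t x * h t x + u t x ^ 2 * (h t x * lh' t x)) * ν x with hDdef
  have hFd : ∀ t ∈ I, HasDerivWithinAt F (D t) I t := by
    intro t ht
    apply HasDerivWithinAt.fun_sum
    intro x _
    have hu2 : HasDerivWithinAt (fun s => u s x ^ 2) (2 * u t x * u' t x) I t := by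
      have := (hderiv t ht x).fun_pow 2
      norm_num at this
      convert this using 1
    have hh : HasDerivWithinAt (fun s => h s x) (h t x * lh' t x) I t := by
      have he := (hlder t ht x).exp
      rw [Real.exp_log (hpos t ht x)] at he
      exact he.congr (fun s hs => (Real.exp_log (hpos s hs x)).symm)
        (Real.exp_log (hpos t ht x)).symm
    have := (hu2.fun_mul hh).mul_const (ν x)
    convert this using 1
  have hD : ∀ t ∈ I, D t ≤ 0 := by
    intro t ht
    have hterm : ∀ x ∈ S,
        (2 * u t x * u' t x * h t x + u t x ^ 2 * (h t x * lh' t x)) * ν x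
        ≤ 2 * (u t x * h t x) * (∑ y ∈ K, (u t y - u t x) * μ x y)
          - u t x ^ 2 * h t x * (∑ y ∈ K, |h t y - h t x| ^ 2 / (4 * h t y * h t x) * μ y x) := by
      intro x hx
      have hT : (∑' y, (u t y - u t x) * μ x y) = ∑ y ∈ K, (u t y - u t x) * μ x y :=
        tsum_eq_sum (fun y hy => by rw [hμ0 x hx y hy, mul_zero])
      have hW : (∑' y, |h t y - h t x| ^ 2 / (4 * h t y * h t x) * μ y x)
          = ∑ y ∈ K, |h t y - h t x| ^ 2 / (4 * h t y * h t x) * μ y x :=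
        tsum_eq_sum (fun y hy => by rw [hμsymm y x, hμ0 x hx y hy, mul_zero])
      have hb := hsub t ht x
      rw [hT] at hb
      have hc := hF t ht x
      rw [hW] at hc
      have hνx := hν x
      have h1 : 2 * u t x * u' t x * h t x * ν x
          ≤ 2 * (u t x * h t x) * (∑ y ∈ K, (u t y - u t x) * μ x y) := by
        have hfac : 0 ≤ 2 * (u t x * h t x) * ν x := by
          have := hunn t ht x; have := hpos t ht x; positivity
        calc 2 * u t x * u' t x * h t x * ν x
            = (2 * (u t x * h t x) * ν x) * u' t x := by ring
          _ ≤ (2 * (u t x * h t x) * ν x) * ((∑ y ∈ K, (u t y - u t x) * μ x y) / ν x) :=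
              mul_le_mul_of_nonneg_left hb hfac
          _ = 2 * (u t x * h t x) * (∑ y ∈ K, (u t y - u t x) * μ x y) := by
              field_simp
      have h2 : u t x ^ 2 * (h t x * lh' t x) * ν x
          ≤ -(u t x ^ 2 * h t x
              * (∑ y ∈ K, |h t y - h t x| ^ 2 / (4 * h t y * h t x) * μ y x)) := by
        have hfac : 0 ≤ u t x ^ 2 * h t x * ν x := by
          have := hpos t ht x; positivity
        have hL : lh' t x ≤ -((∑ y ∈ K, |h t y - h t x| ^ 2 / (4 * h t y * h t x) * μ y x) / ν x) :=
          le_neg.mpr (by linarith)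
        calc u t x ^ 2 * (h t x * lh' t x) * ν x
            = (u t x ^ 2 * h t x * ν x) * lh' t x := by ring
          _ ≤ (u t x ^ 2 * h t x * ν x)
              * (-((∑ y ∈ K, |h t y - h t x| ^ 2 / (4 * h t y * h t x) * μ y x) / ν x)) :=
              mul_le_mul_of_nonneg_left hL hfac
          _ = -(u t x ^ 2 * h t x
              * (∑ y ∈ K, |h t y - h t x| ^ 2 / (4 * h t y * h t x) * μ y x)) := by
              rw [mul_neg, mul_div_assoc', mul_right_comm, mul_div_cancel_right₀ _ hνx.ne']
      linarith
    set G : V → V → ℝ := fun x y => 2 * (u t x * h t x) * ((u t y - u t x) * μ x y)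
      - u t x ^ 2 * h t x * (|h t y - h t x| ^ 2 / (4 * h t y * h t x) * μ y x) with hGdef
    have step1 : D t ≤ ∑ x ∈ K, ∑ y ∈ K, G x y := by
      calc D t ≤ ∑ x ∈ S,
          (2 * (u t x * h t x) * (∑ y ∈ K, (u t y - u t x) * μ x y)
            - u t x ^ 2 * h t x * (∑ y ∈ K, |h t y - h t x| ^ 2 / (4 * h t y * h t x) * μ y x)) :=
          Finset.sum_le_sum hterm
        _ = ∑ x ∈ K,
          (2 * (u t x * h t x) * (∑ y ∈ K, (u t y - u t x) * μ x y)
            - u t x ^ 2 * h t x * (∑ y ∈ K, |h t y - h t x| ^ 2 / (4 * h t y * h t x) * μ y x)) :=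
          Finset.sum_subset hSK (fun x _ hx => by rw [hsupp t ht x hx]; ring)
        _ = ∑ x ∈ K, ∑ y ∈ K, G x y := by
          refine Finset.sum_congr rfl fun x _ => ?_
          rw [Finset.mul_sum, Finset.mul_sum, ← Finset.sum_sub_distrib]
    have hGpair : ∀ x y, G x y + G y x ≤ 0 := by
      intro x y
      rcases (hμnn x y).eq_or_lt with hm | hm
      · have h0 : μ x y = 0 := hm.symm
        have h0' : μ y x = 0 := (hμsymm y x).trans h0
        simp [hGdef, h0, h0']
      · have key := key_ineq (u t x) (u t y) (h t x) (h t y)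
          (hunn t ht x) (hunn t ht y) (hpos t ht x) (hpos t ht y)
        have heq : G x y + G y x
            = (2 * (u t x * h t x) * (u t y - u t x) + 2 * (u t y * h t y) * (u t x - u t y)
              - u t x ^ 2 * h t x * ((h t y - h t x) ^ 2 / (4 * h t y * h t x))
              - u t y ^ 2 * h t y * ((h t x - h t y) ^ 2 / (4 * h t x * h t y))) * μ x y := by
          simp only [hGdef, sq_abs, hμsymm y x]
          ring
        rw [heq]
        exact mul_nonpos_of_nonpos_of_nonneg (by linarith [key]) hm.le
    have step2 : ∑ x ∈ K, ∑ y ∈ K, G x y ≤ 0 := by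
      have hcomm : ∑ x ∈ K, ∑ y ∈ K, G y x = ∑ x ∈ K, ∑ y ∈ K, G x y := Finset.sum_comm
      have h2 : 2 * (∑ x ∈ K, ∑ y ∈ K, G x y) = ∑ x ∈ K, ∑ y ∈ K, (G x y + G y x) := by
        simp only [Finset.sum_add_distrib, hcomm]
        ring
      have h3 : ∑ x ∈ K, ∑ y ∈ K, (G x y + G y x) ≤ 0 :=
        Finset.sum_nonpos fun x _ => Finset.sum_nonpos fun y _ => hGpair x y
      linarith
    linarith
  have hconv : Convex ℝ I := convex_iff_ordConnected.mpr hI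
  have hanti : AntitoneOn F I := by
    apply antitoneOn_of_deriv_nonpos hconv
    · exact fun t ht => (hFd t ht).continuousWithinAt
    · intro t ht
      exact ((hFd t (interior_subset ht)).hasDerivAt
        (mem_interior_iff_mem_nhds.mp ht)).differentiableAt.differentiableWithinAt
    · intro t ht
      rw [((hFd t (interior_subset ht)).hasDerivAt (mem_interior_iff_mem_nhds.mp ht)).deriv]
      exact hD t (interior_subset ht)
  intro s hs r hr hsr
  simp only []
  rw [hJF s hs, hJF r hr]
  exact hanti hs hr hsr
end

section
/- Fix a ∈ [0, 1/4] and a function ρ : V → [0,∞) satisfying |ρ(x) − ρ(y)| ≤ d_ν(x,y) whenever x ∼ y, where d_ν is an adapted metric. Then h₁(t,x) = exp(a ρ(x) − (a²/2) t) satisfies, for all t ≥ 0 and all adjacent x ∼ y, |h₁(t,x) − h₁(t,y)|² / (4 h₁(t,x) h₁(t,y)) ≤ −d_ν(x,y)² · (∂/∂t) log h₁(t,y). -/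
/-- Auxiliary: for `|u| ≤ 1`, `exp u + exp (-u) - 2 ≤ 2 u ^ 2`. -/
lemma cosh_aux {u : ℝ} (hu : |u| ≤ 1) :
    Real.exp u + Real.exp (-u) - 2 ≤ 2 * u ^ 2 := by
  have h1 := Real.exp_bound hu (n := 2) (by norm_num)
  have h2 := Real.exp_bound (x := -u) (by rwa [abs_neg]) (n := 2) (by norm_num)
  simp only [Finset.sum_range_succ, Finset.sum_range_zero, Nat.factorial] at h1 h2
  norm_num at h1 h2
  rw [abs_sub_le_iff] at h1 h2
  nlinarith [h1.1, h2.1, sq_abs u]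

/-- The function h₁(t,x) = exp(a ρ(x) − (a²/2) t) satisfies the key inequality
of the Integral Maximum Principle. -/
theorem h1_in_F (V : Type*) (adj : V → V → Prop) (dν : V → V → ℝ) (ρ : V → ℝ) (a : ℝ)
    (ha0 : 0 ≤ a) (ha : a ≤ 1 / 4)
    (hρnn : ∀ x, 0 ≤ ρ x) (hdnn : ∀ x y, 0 ≤ dν x y)
    (hlip : ∀ x y, adj x y → |ρ x - ρ y| ≤ dν x y)
    (hd1 : ∀ x y, adj x y → dν x y ≤ 1) :
    ∀ t : ℝ, 0 ≤ t → ∀ x y, adj x y →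
      |Real.exp (a * ρ x - a ^ 2 / 2 * t) - Real.exp (a * ρ y - a ^ 2 / 2 * t)| ^ 2 /
          (4 * Real.exp (a * ρ x - a ^ 2 / 2 * t) * Real.exp (a * ρ y - a ^ 2 / 2 * t)) ≤
        - dν x y ^ 2 *
          deriv (fun s => Real.log (Real.exp (a * ρ y - a ^ 2 / 2 * s))) t := by
  intro t ht x y hxy
  -- compute the derivative
  have hderiv : deriv (fun s => Real.log (Real.exp (a * ρ y - a ^ 2 / 2 * s))) t
      = -(a ^ 2 / 2) := by
    simp only [Real.log_exp]
    have : HasDerivAt (fun s : ℝ => a * ρ y - a ^ 2 / 2 * s) (-(a ^ 2 / 2)) t := by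
      simpa using ((hasDerivAt_id t).const_mul (a ^ 2 / 2)).const_sub (a * ρ y)
    exact this.deriv
  rw [hderiv]
  set A := a * ρ x - a ^ 2 / 2 * t
  set B := a * ρ y - a ^ 2 / 2 * t
  have hApos := Real.exp_pos A
  have hBpos := Real.exp_pos B
  set u := a * (ρ x - ρ y) with hu
  have hAB : A - B = u := by simp [A, B, hu]; ring
  have hud : |u| ≤ a * dν x y := by
    rw [hu, abs_mul, abs_of_nonneg ha0]
    exact mul_le_mul_of_nonneg_left (hlip x y hxy) ha0
  have had : a * dν x y ≤ 1 := by
    calc a * dν x y ≤ (1/4) * 1 := by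
          apply mul_le_mul ha (hd1 x y hxy) (hdnn x y) (by norm_num)
      _ ≤ 1 := by norm_num
  have hcosh : Real.exp u + Real.exp (-u) - 2 ≤ 2 * u ^ 2 :=
    cosh_aux (hud.trans had)
  -- key algebraic identity: |e^A - e^B|^2 / (4 e^A e^B) = (e^u + e^{-u} - 2)/4
  have hid : |Real.exp A - Real.exp B| ^ 2 / (4 * Real.exp A * Real.exp B)
      = (Real.exp u + Real.exp (-u) - 2) / 4 := by
    rw [sq_abs]
    have h1 : Real.exp A = Real.exp B * Real.exp u := by
      rw [← Real.exp_add]; congr 1; linarith [hAB]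
    have h2 : Real.exp u * Real.exp (-u) = 1 := by
      rw [← Real.exp_add]; simp
    rw [h1, Real.exp_neg]
    field_simp
    ring
  rw [hid]
  have hu2 : u ^ 2 ≤ (a * dν x y) ^ 2 := by
    have := sq_abs u
    nlinarith [hud, abs_nonneg u]
  nlinarith [hcosh, hu2]
end

section
/- Fix D ≥ 5, R ≥ 1, Δ ≥ 24R/D, s > 0, and ε ∈ [0,1]. For any r₁, r₂ ∈ [1,R] with |r₁ − r₂| ≤ ε, and any t ∈ [0,s], setting h(t,r) = exp(−r²/(D(s − t + Δ))), one has |h(t,r₁) − h(t,r₂)|² / (4 h(t,r₁) h(t,r₂)) ≤ −ε² · (∂/∂t) log h(t,r₂), i.e. (e^{b} + e^{-b} − 2)/4 ≤ ε² r₂² / (D(s − t + Δ)²), where b = |r₁² − r₂²|/(D(s − t + Δ)). -/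
set_option maxHeartbeats 1000000

theorem gaussian_weight_ineq (D R Δ s ε r₁ r₂ t : ℝ)
    (hD : 5 ≤ D) (hR : 1 ≤ R) (hΔ : 24 * R / D ≤ Δ) (hs : 0 < s)
    (hε0 : 0 ≤ ε) (hε1 : ε ≤ 1)
    (hr₁ : 1 ≤ r₁) (hr₁R : r₁ ≤ R) (hr₂ : 1 ≤ r₂) (hr₂R : r₂ ≤ R)
    (hdiff : |r₁ - r₂| ≤ ε) (ht0 : 0 ≤ t) (hts : t ≤ s) :
    (Real.exp (|r₁ ^ 2 - r₂ ^ 2| / (D * (s - t + Δ))) +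
        Real.exp (-(|r₁ ^ 2 - r₂ ^ 2| / (D * (s - t + Δ)))) - 2) / 4 ≤
      ε ^ 2 * r₂ ^ 2 / (D * (s - t + Δ) ^ 2) := by
  have hD0 : (0:ℝ) < D := by linarith
  set u : ℝ := s - t + Δ with hu_def
  have hΔ0 : 0 < Δ := lt_of_lt_of_le (by positivity) hΔ
  have hu0 : 0 < u := by simp only [hu_def]; linarith
  have huR : 24 * R / D ≤ u := by simp only [hu_def]; linarith
  have hDu : 24 * r₂ ≤ D * u := by
    have : 24 * R ≤ D * u := by
      rw [div_le_iff₀ hD0] at huR; linarith [huR]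
    linarith [this, hr₂R]
  set b : ℝ := |r₁ ^ 2 - r₂ ^ 2| / (D * u) with hb_def
  have hb0 : 0 ≤ b := by positivity
  set c : ℝ := ε * r₂ / (D * u) with hc_def
  have hc0 : 0 ≤ c := by positivity
  -- |r₁² - r₂²| ≤ 3 ε r₂
  have habs : |r₁ ^ 2 - r₂ ^ 2| ≤ ε * (3 * r₂) := by
    have h1 : r₁ ^ 2 - r₂ ^ 2 = (r₁ - r₂) * (r₁ + r₂) := by ring
    rw [h1, abs_mul]
    have h2 : |r₁ + r₂| = r₁ + r₂ := abs_of_pos (by linarith)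
    have h3 : r₁ ≤ r₂ + ε := by
      have := abs_le.1 hdiff; linarith [this.1, this.2]
    have h4 : r₁ + r₂ ≤ 3 * r₂ := by linarith
    rw [h2]
    exact mul_le_mul hdiff h4 (by linarith) hε0
  have hb3c : b ≤ 3 * c := by
    rw [hb_def, hc_def, div_le_iff₀ (by positivity)]
    have heq : 3 * (ε * r₂ / (D * u)) * (D * u) = ε * (3 * r₂) := by
      field_simp
    rw [heq]; exact habs
  have hc18 : c ≤ 1 / 24 := by
    rw [hc_def, div_le_div_iff₀ (by positivity) (by norm_num)]
    have : ε * r₂ ≤ r₂ := by nlinarith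
    nlinarith
  have hb1 : |b| ≤ 1 := by
    rw [abs_of_nonneg hb0]; linarith
  -- exp bounds
  have h1 := Real.exp_bound hb1 (n := 2) (by norm_num)
  have hb1' : |(-b)| ≤ 1 := by rwa [abs_neg]
  have h2 := Real.exp_bound hb1' (n := 2) (by norm_num)
  have hsum1 : ∑ m ∈ Finset.range 2, b ^ m / (m.factorial : ℝ) = 1 + b := by
    simp [Finset.sum_range_succ]
  have hsum2 : ∑ m ∈ Finset.range 2, (-b) ^ m / (m.factorial : ℝ) = 1 - b := by
    simp [Finset.sum_range_succ]
    ring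
  rw [hsum1] at h1
  rw [hsum2] at h2
  have hab : |b| = b := abs_of_nonneg hb0
  rw [hab] at h1
  rw [abs_neg, hab] at h2
  have hK : (((2:ℕ).succ : ℝ) / ((2:ℕ).factorial * (2:ℕ))) = 3 / 4 := by
    norm_num [Nat.factorial]
  rw [hK] at h1 h2
  have he1 : Real.exp b ≤ 1 + b + b ^ 2 * (3 / 4) := by
    have := (abs_sub_le_iff.1 h1).1; linarith
  have he2 : Real.exp (-b) ≤ 1 - b + b ^ 2 * (3 / 4) := by
    have := (abs_sub_le_iff.1 h2).1; linarith
  have hrhs : ε ^ 2 * r₂ ^ 2 / (D * u ^ 2) = D * c ^ 2 := by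
    rw [hc_def]; field_simp
  rw [hrhs]
  clear_value b c u
  have hbsq : b ^ 2 ≤ 9 * c ^ 2 := by
    have := pow_le_pow_left₀ hb0 hb3c 2
    nlinarith [this]
  have h5 : 5 * c ^ 2 ≤ D * c ^ 2 := by
    have := mul_le_mul_of_nonneg_right hD (sq_nonneg c)
    linarith
  linarith [he1, he2, hbsq, h5, sq_nonneg c]
end

section
/- Let u : [0,∞) × V → [0,∞) be a positive subsolution of the heat equation on a weighted graph with finite spatial support, with initial condition u(0,z) = ν_o^{-1/2} 1_{z=o}. Then for all t ≥ R > 0: Σ_{z : d_ν(o,z) ≥ R} u(t,z)² ν_z ≤ exp(−R²/(8t)). -/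
open Classical

section helpers
variable {V : Type*}

lemma abs_exp_sub_one_le' (s : ℝ) : |Real.exp s - 1| ≤ |s| * Real.exp |s| := by
  rcases le_or_gt 0 s with h | h
  · rw [abs_of_nonneg h, abs_of_nonneg (by linarith [Real.one_le_exp h] : (0:ℝ) ≤ Real.exp s - 1)]
    have h1 : 1 - s ≤ Real.exp (-s) := by linarith [Real.add_one_le_exp (-s)]
    have h2 : Real.exp (-s) * Real.exp s = 1 := by rw [← Real.exp_add]; simp
    nlinarith [Real.exp_pos s]
  · rw [abs_of_neg h, abs_of_nonpos (by linarith [Real.exp_lt_one_iff.mpr h] : Real.exp s - 1 ≤ 0)]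
    have h1 : 1 ≤ Real.exp (-s) := Real.one_le_exp (by linarith)
    nlinarith [Real.add_one_le_exp s]

lemma weight_est' (lam fx fy dxy : ℝ) (hlam : 0 ≤ lam) (hf : |fx - fy| ≤ dxy) (hd1 : dxy ≤ 1) :
    (Real.exp (lam * fx) - Real.exp (lam * fy)) ^ 2
      ≤ lam ^ 2 * Real.exp (2 * lam) * Real.exp (lam * fx) ^ 2 * dxy ^ 2 := by
  have hd0 : 0 ≤ dxy := le_trans (abs_nonneg _) hf
  have key : |Real.exp (lam * fx) - Real.exp (lam * fy)| ≤ Real.exp (lam * fx) * (lam * dxy * Real.exp lam) := by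
    have hfac : Real.exp (lam * fy) = Real.exp (lam * fx) * Real.exp (lam * (fy - fx)) := by
      rw [← Real.exp_add]; ring_nf
    rw [hfac]
    have heq : Real.exp (lam * fx) - Real.exp (lam * fx) * Real.exp (lam * (fy - fx))
        = Real.exp (lam * fx) * (1 - Real.exp (lam * (fy - fx))) := by ring
    rw [heq, abs_mul, abs_of_pos (Real.exp_pos _)]
    apply mul_le_mul_of_nonneg_left _ (Real.exp_pos _).le
    rw [abs_sub_comm]
    calc |Real.exp (lam * (fy - fx)) - 1| ≤ |lam * (fy - fx)| * Real.exp |lam * (fy - fx)| :=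
          abs_exp_sub_one_le' _
      _ ≤ lam * dxy * Real.exp lam := by
          have habs : |lam * (fy - fx)| ≤ lam * dxy := by
            rw [abs_mul, abs_of_nonneg hlam, abs_sub_comm]
            exact mul_le_mul_of_nonneg_left hf hlam
          have h2 : Real.exp |lam * (fy - fx)| ≤ Real.exp lam :=
            Real.exp_le_exp.mpr (le_trans habs (by nlinarith))
          exact mul_le_mul habs h2 (Real.exp_pos _).le (by positivity)
  calc (Real.exp (lam * fx) - Real.exp (lam * fy)) ^ 2
      = |Real.exp (lam * fx) - Real.exp (lam * fy)| ^ 2 := (sq_abs _).symm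
    _ ≤ (Real.exp (lam * fx) * (lam * dxy * Real.exp lam)) ^ 2 := by
        apply pow_le_pow_left₀ (abs_nonneg _) key
    _ = lam ^ 2 * (Real.exp lam ^ 2) * Real.exp (lam * fx) ^ 2 * dxy ^ 2 := by ring
    _ = lam ^ 2 * Real.exp (2 * lam) * Real.exp (lam * fx) ^ 2 * dxy ^ 2 := by
        have : Real.exp lam ^ 2 = Real.exp (2 * lam) := by
          rw [sq, ← Real.exp_add]; ring_nf
        rw [this]

lemma symm_bound' (T : Finset V) (a w : V → ℝ) (m : V → V → ℝ)
    (hmsym : ∀ x y, m x y = m y x) (hmnn : ∀ x y, 0 ≤ m x y) :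
    ∑ x ∈ T, ∑ y ∈ T, 2 * a x * w x ^ 2 * (a y - a x) * m x y
      ≤ ∑ x ∈ T, a x ^ 2 * ∑ y ∈ T, (w x - w y) ^ 2 * m x y := by
  have hcomm : ∑ x ∈ T, ∑ y ∈ T, 2 * a x * w x ^ 2 * (a y - a x) * m x y
      = ∑ x ∈ T, ∑ y ∈ T, 2 * a y * w y ^ 2 * (a x - a y) * m y x := Finset.sum_comm
  have hcomm2 : ∑ x ∈ T, ∑ y ∈ T, a y ^ 2 * ((w y - w x) ^ 2 * m y x)
      = ∑ x ∈ T, ∑ y ∈ T, a x ^ 2 * ((w x - w y) ^ 2 * m x y) := Finset.sum_comm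
  have key : ∀ x ∈ T, ∀ y ∈ T,
      2 * a x * w x ^ 2 * (a y - a x) * m x y + 2 * a y * w y ^ 2 * (a x - a y) * m y x
      ≤ a x ^ 2 * ((w x - w y) ^ 2 * m x y) + a y ^ 2 * ((w y - w x) ^ 2 * m y x) := by
    intro x _ y _
    rw [hmsym y x]
    nlinarith [mul_nonneg (hmnn x y) (sq_nonneg (a y * w y - a x * w x)),
      mul_nonneg (hmnn x y) (mul_nonneg (sq_nonneg (a x - a y)) (sq_nonneg (w x - w y))),
      hmnn x y, sq_nonneg (a x - a y), sq_nonneg (w x - w y)]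
  have h2 : 2 * ∑ x ∈ T, ∑ y ∈ T, 2 * a x * w x ^ 2 * (a y - a x) * m x y
      ≤ 2 * ∑ x ∈ T, ∑ y ∈ T, a x ^ 2 * ((w x - w y) ^ 2 * m x y) := by
    calc 2 * ∑ x ∈ T, ∑ y ∈ T, 2 * a x * w x ^ 2 * (a y - a x) * m x y
        = ∑ x ∈ T, ∑ y ∈ T, (2 * a x * w x ^ 2 * (a y - a x) * m x y
            + 2 * a y * w y ^ 2 * (a x - a y) * m y x) := by
          rw [two_mul]; nth_rewrite 2 [hcomm]
          rw [← Finset.sum_add_distrib]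
          exact Finset.sum_congr rfl fun x _ => by rw [← Finset.sum_add_distrib]
      _ ≤ ∑ x ∈ T, ∑ y ∈ T, (a x ^ 2 * ((w x - w y) ^ 2 * m x y)
            + a y ^ 2 * ((w y - w x) ^ 2 * m y x)) := by
          apply Finset.sum_le_sum; intro x hx
          exact Finset.sum_le_sum fun y hy => key x hx y hy
      _ = 2 * ∑ x ∈ T, ∑ y ∈ T, a x ^ 2 * ((w x - w y) ^ 2 * m x y) := by
          rw [two_mul]; nth_rewrite 2 [← hcomm2]
          rw [← Finset.sum_add_distrib]
          exact Finset.sum_congr rfl fun x _ => by rw [← Finset.sum_add_distrib]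
  calc ∑ x ∈ T, ∑ y ∈ T, 2 * a x * w x ^ 2 * (a y - a x) * m x y
      ≤ ∑ x ∈ T, ∑ y ∈ T, a x ^ 2 * ((w x - w y) ^ 2 * m x y) := by linarith
    _ = ∑ x ∈ T, a x ^ 2 * ∑ y ∈ T, (w x - w y) ^ 2 * m x y := by
        exact Finset.sum_congr rfl fun x _ => (Finset.mul_sum _ _ _).symm

end helpers

/-- Tail estimate for a positive subsolution started as a normalized point mass. -/
theorem tail_estimate_long_time
    (V : Type*) (μ : V → V → ℝ) (ν : V → ℝ) (dν : V → V → ℝ)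
    (hμsymm : ∀ x y, μ x y = μ y x) (hμnn : ∀ x y, 0 ≤ μ x y)
    (hν : ∀ x, 0 < ν x) (hloc : ∀ x, {y | μ x y ≠ 0}.Finite)
    (hdsymm : ∀ x y, dν x y = dν y x) (hd0 : ∀ x, dν x x = 0)
    (hdnn : ∀ x y, 0 ≤ dν x y)
    (hdtri : ∀ x y z, dν x z ≤ dν x y + dν y z)
    (hadapt1 : ∀ x, (∑' y, dν x y ^ 2 * μ x y) / ν x ≤ 1)
    (hadapt2 : ∀ x y, 0 < μ x y → dν x y ≤ 1)
    (o : V) (u u' : ℝ → V → ℝ)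
    (hunn : ∀ t x, 0 ≤ t → 0 ≤ u t x)
    (S : Finset V) (hsupp : ∀ t x, x ∉ S → u t x = 0)
    (hu0 : ∀ z, u 0 z = if z = o then (Real.sqrt (ν o))⁻¹ else 0)
    (hderiv : ∀ t x, 0 ≤ t →
      HasDerivWithinAt (fun s => u s x) (u' t x) (Set.Ici 0) t)
    (hsub : ∀ t x, 0 ≤ t → u' t x ≤ (∑' y, (u t y - u t x) * μ x y) / ν x)
    (t R : ℝ) (hR : 0 < R) (ht : R ≤ t) :
    ∑' z, (if R ≤ dν o z then u t z ^ 2 * ν z else 0) ≤ Real.exp (-(R ^ 2) / (8 * t)) := by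
  classical
  have ht0 : 0 < t := lt_of_lt_of_le hR ht
  set lam : ℝ := R / (2 * t) with hlam
  have hlampos : 0 < lam := by positivity
  have hlamle : 2 * lam ≤ 1 := by
    have h : lam * (2 * t) = R := by rw [hlam]; field_simp
    nlinarith [h, ht, ht0]
  set w : V → ℝ := fun z => Real.exp (lam * dν o z) with hwdef
  set C : ℝ := lam ^ 2 * Real.exp (2 * lam) with hCdef
  set T : Finset V := S ∪ S.biUnion (fun x => (hloc x).toFinset) with hTdef
  have hST : S ⊆ T := Finset.subset_union_left
  have hNT : ∀ x ∈ S, ∀ y, μ x y ≠ 0 → y ∈ T := by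
    intro x hx y hy
    apply Finset.mem_union_right
    exact Finset.mem_biUnion.mpr ⟨x, hx, (hloc x).mem_toFinset.mpr hy⟩
  have hoS : o ∈ S := by
    by_contra h
    have h1 := hsupp 0 o h
    rw [hu0 o, if_pos rfl] at h1
    exact (inv_ne_zero (ne_of_gt (Real.sqrt_pos.mpr (hν o)))) h1
  -- tsum reductions
  have htsum_mu : ∀ s x, x ∈ S → (∑' y, (u s y - u s x) * μ x y) = ∑ y ∈ T, (u s y - u s x) * μ x y := by
    intro s x hx
    apply tsum_eq_sum
    intro y hy
    by_cases h : μ x y = 0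
    · rw [h, mul_zero]
    · exact absurd (hNT x hx y h) hy
  have hd2 : ∀ x, ∑ y ∈ T, dν x y ^ 2 * μ x y ≤ ν x := by
    intro x
    have hsummable : Summable (fun y => dν x y ^ 2 * μ x y) := by
      apply summable_of_ne_finset_zero (s := (hloc x).toFinset)
      intro y hy
      have : μ x y = 0 := by
        by_contra h; exact hy ((hloc x).mem_toFinset.mpr h)
      rw [this, mul_zero]
    have h1 : ∑ y ∈ T, dν x y ^ 2 * μ x y ≤ ∑' y, dν x y ^ 2 * μ x y :=
      Summable.sum_le_tsum T (fun y _ => mul_nonneg (sq_nonneg _) (hμnn x y)) hsummable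
    have h2 : (∑' y, dν x y ^ 2 * μ x y) ≤ ν x := by
      have := hadapt1 x
      rwa [div_le_one (hν x)] at this
    linarith
  set E : ℝ → ℝ := fun s => ∑ x ∈ T, u s x ^ 2 * (w x ^ 2 * ν x) with hEdef
  set D : ℝ → ℝ := fun s => ∑ x ∈ T, 2 * u s x * u' s x * (w x ^ 2 * ν x) with hDdef
  have hEnn : ∀ s, 0 ≤ E s := by
    intro s; apply Finset.sum_nonneg; intro x _
    exact mul_nonneg (sq_nonneg _) (mul_nonneg (sq_nonneg _) (hν x).le)
  have hEderiv : ∀ s, 0 ≤ s → HasDerivWithinAt E (D s) (Set.Ici 0) s := by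
    intro s hs
    have : HasDerivWithinAt (fun r => ∑ x ∈ T, u r x ^ 2 * (w x ^ 2 * ν x))
        (∑ x ∈ T, (2 : ℕ) * u s x ^ (2 - 1) * u' s x * (w x ^ 2 * ν x)) (Set.Ici 0) s := by
      apply HasDerivWithinAt.fun_sum
      intro x _
      exact ((hderiv s x hs).pow 2).mul_const _
    convert this using 1
    rw [hDdef]
    apply Finset.sum_congr rfl
    intro x _
    push_cast
    ring
  -- key differential inequality
  have hkey : ∀ s, 0 ≤ s → D s ≤ C * E s := by
    intro s hs
    have step1 : D s ≤ ∑ x ∈ T, ∑ y ∈ T, 2 * u s x * w x ^ 2 * (u s y - u s x) * μ x y := by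
      apply Finset.sum_le_sum
      intro x hxT
      by_cases hx : x ∈ S
      · have h1 : u' s x * ν x ≤ ∑ y ∈ T, (u s y - u s x) * μ x y := by
          have := hsub s x hs
          rw [htsum_mu s x hx] at this
          rw [div_eq_mul_inv] at this
          calc u' s x * ν x ≤ ((∑ y ∈ T, (u s y - u s x) * μ x y) * (ν x)⁻¹) * ν x :=
                mul_le_mul_of_nonneg_right this (hν x).le
            _ = ∑ y ∈ T, (u s y - u s x) * μ x y := by
                rw [mul_assoc, inv_mul_cancel₀ (hν x).ne', mul_one]
        have h2 : 0 ≤ 2 * u s x * w x ^ 2 :=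
          mul_nonneg (by linarith [hunn s x hs] : (0:ℝ) ≤ 2 * u s x) (sq_nonneg _)
        calc 2 * u s x * u' s x * (w x ^ 2 * ν x)
            = (2 * u s x * w x ^ 2) * (u' s x * ν x) := by ring
          _ ≤ (2 * u s x * w x ^ 2) * ∑ y ∈ T, (u s y - u s x) * μ x y :=
              mul_le_mul_of_nonneg_left h1 h2
          _ = ∑ y ∈ T, 2 * u s x * w x ^ 2 * (u s y - u s x) * μ x y := by
              rw [Finset.mul_sum]; exact Finset.sum_congr rfl fun y _ => by ring
      · have h0 : u s x = 0 := hsupp s x hx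
        rw [h0]
        simp
    have step2 : ∑ x ∈ T, ∑ y ∈ T, 2 * u s x * w x ^ 2 * (u s y - u s x) * μ x y
        ≤ ∑ x ∈ T, u s x ^ 2 * ∑ y ∈ T, (w x - w y) ^ 2 * μ x y :=
      symm_bound' T (u s) w μ hμsymm hμnn
    have step3 : ∀ x ∈ T, ∑ y ∈ T, (w x - w y) ^ 2 * μ x y ≤ C * (w x ^ 2 * ν x) := by
      intro x _
      have hterm : ∀ y ∈ T, (w x - w y) ^ 2 * μ x y ≤ C * w x ^ 2 * (dν x y ^ 2 * μ x y) := by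
        intro y _
        by_cases h : μ x y = 0
        · rw [h]; simp
        · have hpos : 0 < μ x y := lt_of_le_of_ne (hμnn x y) (Ne.symm h)
          have htri : |dν o x - dν o y| ≤ dν x y := by
            rw [abs_le]
            constructor
            · have := hdtri o x y
              rw [hdsymm x y] at *
              linarith [hdtri o y x, hdsymm y x]
            · linarith [hdtri o y x, hdsymm y x]
          have := weight_est' lam (dν o x) (dν o y) (dν x y) hlampos.le htri (hadapt2 x y hpos)
          calc (w x - w y) ^ 2 * μ x y
              ≤ (lam ^ 2 * Real.exp (2 * lam) * Real.exp (lam * dν o x) ^ 2 * dν x y ^ 2) * μ x y := by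
                apply mul_le_mul_of_nonneg_right _ (hμnn x y)
                exact this
            _ = C * w x ^ 2 * (dν x y ^ 2 * μ x y) := by rw [hCdef, hwdef]; ring
      calc ∑ y ∈ T, (w x - w y) ^ 2 * μ x y
          ≤ ∑ y ∈ T, C * w x ^ 2 * (dν x y ^ 2 * μ x y) := Finset.sum_le_sum hterm
        _ = C * w x ^ 2 * ∑ y ∈ T, dν x y ^ 2 * μ x y := by rw [Finset.mul_sum]
        _ ≤ C * w x ^ 2 * ν x := by
            apply mul_le_mul_of_nonneg_left (hd2 x)
            have := Real.exp_pos (2 * lam)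
            have := Real.exp_pos (lam * dν o x)
            rw [hCdef, hwdef]
            positivity
        _ = C * (w x ^ 2 * ν x) := by ring
    have step4 : ∑ x ∈ T, u s x ^ 2 * ∑ y ∈ T, (w x - w y) ^ 2 * μ x y ≤ C * E s := by
      rw [hEdef, Finset.mul_sum]
      apply Finset.sum_le_sum
      intro x hx
      calc u s x ^ 2 * ∑ y ∈ T, (w x - w y) ^ 2 * μ x y
          ≤ u s x ^ 2 * (C * (w x ^ 2 * ν x)) :=
            mul_le_mul_of_nonneg_left (step3 x hx) (sq_nonneg _)
        _ = C * (u s x ^ 2 * (w x ^ 2 * ν x)) := by ring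
    linarith
  -- Gronwall: E t ≤ exp (C * t)
  have hEt : E t ≤ Real.exp (C * t) := by
    set g : ℝ → ℝ := fun s => E s * Real.exp (-C * s) with hgdef
    have hg' : ∀ s ∈ Set.Ioo (0:ℝ) t, HasDerivAt g
        (D s * Real.exp (-C * s) + E s * (Real.exp (-C * s) * -C)) s := by
      intro s hs
      have hE : HasDerivAt E (D s) s :=
        (hEderiv s hs.1.le).hasDerivAt (Ici_mem_nhds hs.1)
      have hexp : HasDerivAt (fun s : ℝ => Real.exp (-C * s)) (Real.exp (-C * s) * -C) s := by
        have h1 : HasDerivAt (fun s : ℝ => -C * s) (-C) s := by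
          simpa using (hasDerivAt_id s).const_mul (-C)
        simpa using h1.exp
      exact hE.mul hexp
    have hanti : AntitoneOn g (Set.Icc 0 t) := by
      apply antitoneOn_of_deriv_nonpos (convex_Icc 0 t)
      · have hEcont : ContinuousOn E (Set.Icc 0 t) := by
          intro s hs
          exact ((hEderiv s hs.1).continuousWithinAt).mono (fun r hr => hr.1)
        exact hEcont.mul ((Real.continuous_exp.comp (continuous_const.mul continuous_id)).continuousOn)
      · rw [interior_Icc]
        intro s hs
        exact ((hg' s hs).differentiableAt).differentiableWithinAt
      · rw [interior_Icc]
        intro s hs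
        rw [(hg' s hs).deriv]
        have h1 : D s ≤ C * E s := hkey s hs.1.le
        have h2 : 0 < Real.exp (-C * s) := Real.exp_pos _
        nlinarith [hEnn s]
    have hgle : g t ≤ g 0 :=
      hanti (Set.mem_Icc.mpr ⟨le_refl 0, ht0.le⟩) (Set.mem_Icc.mpr ⟨ht0.le, le_refl t⟩) ht0.le
    have hE0 : E 0 = 1 := by
      show ∑ x ∈ T, u 0 x ^ 2 * (w x ^ 2 * ν x) = 1
      have hterm : ∀ x, u 0 x ^ 2 * (w x ^ 2 * ν x)
          = if x = o then (Real.sqrt (ν o))⁻¹ ^ 2 * (w o ^ 2 * ν o) else 0 := by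
        intro x
        rw [hu0 x]
        split
        · rename_i hxo; rw [hxo]
        · simp
      rw [Finset.sum_congr rfl (fun x _ => hterm x)]
      rw [Finset.sum_ite_eq' T o]
      rw [if_pos (hST hoS)]
      have hwo : w o = 1 := by rw [hwdef]; simp [hd0 o]
      rw [hwo]
      rw [inv_pow, one_pow, one_mul, Real.sq_sqrt (hν o).le]
      exact inv_mul_cancel₀ (hν o).ne'
    have := hgle
    rw [hgdef] at this
    simp only at this
    rw [hE0, mul_zero, Real.exp_zero, mul_one] at this
    have h3 : Real.exp (-C * t) * Real.exp (C * t) = 1 := by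
      rw [← Real.exp_add]; ring_nf; exact Real.exp_zero
    nlinarith [Real.exp_pos (C * t), Real.exp_pos (-C * t)]
  -- tail estimate
  have htail : (∑' z, (if R ≤ dν o z then u t z ^ 2 * ν z else 0))
      ≤ Real.exp (-(2 * lam * R)) * E t := by
    have hts : (∑' z, (if R ≤ dν o z then u t z ^ 2 * ν z else 0))
        = ∑ z ∈ T, (if R ≤ dν o z then u t z ^ 2 * ν z else 0) := by
      apply tsum_eq_sum
      intro z hz
      have : u t z = 0 := hsupp t z (fun hzS => hz (hST hzS))
      rw [this]
      simp
    rw [hts, hEdef, Finset.mul_sum]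
    apply Finset.sum_le_sum
    intro z _
    by_cases hzd : R ≤ dν o z
    · rw [if_pos hzd]
      have hw2 : w z ^ 2 = Real.exp (2 * (lam * dν o z)) := by
        rw [hwdef]
        simp only
        rw [sq, ← Real.exp_add]; ring_nf
      have h1 : 1 ≤ Real.exp (-(2 * lam * R)) * Real.exp (2 * (lam * dν o z)) := by
        rw [← Real.exp_add]
        apply Real.one_le_exp
        nlinarith [hlampos]
      calc u t z ^ 2 * ν z = (u t z ^ 2 * ν z) * 1 := by ring
        _ ≤ (u t z ^ 2 * ν z) * (Real.exp (-(2 * lam * R)) * Real.exp (2 * (lam * dν o z))) := by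
            apply mul_le_mul_of_nonneg_left h1
            exact mul_nonneg (sq_nonneg _) (hν z).le
        _ = Real.exp (-(2 * lam * R)) * (u t z ^ 2 * (Real.exp (2 * (lam * dν o z)) * ν z)) := by ring
        _ = Real.exp (-(2 * lam * R)) * (u t z ^ 2 * (w z ^ 2 * ν z)) := by rw [hw2]
    · rw [if_neg hzd]
      have := Real.exp_pos (-(2 * lam * R))
      apply mul_nonneg this.le
      exact mul_nonneg (sq_nonneg _) (mul_nonneg (sq_nonneg _) (hν z).le)
  -- final arithmetic
  have harith : C * t - 2 * lam * R ≤ -(R ^ 2) / (8 * t) := by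
    have hexp : Real.exp (2 * lam) ≤ 7 / 2 := by
      calc Real.exp (2 * lam) ≤ Real.exp 1 := Real.exp_le_exp.mpr hlamle
        _ ≤ 2.7182818286 := Real.exp_one_lt_d9.le
        _ ≤ 7 / 2 := by norm_num
    have h1 : lam ^ 2 * t = R ^ 2 / (4 * t) := by
      rw [hlam]; field_simp; ring
    have h2 : 2 * lam * R = R ^ 2 / t := by
      rw [hlam]; field_simp
    rw [hCdef]
    have h3 : lam ^ 2 * Real.exp (2 * lam) * t ≤ (R ^ 2 / (4 * t)) * (7 / 2) := by
      have : lam ^ 2 * Real.exp (2 * lam) * t = (lam ^ 2 * t) * Real.exp (2 * lam) := by ring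
      rw [this, h1]
      apply mul_le_mul_of_nonneg_left hexp (by positivity)
    rw [h2] at *
    have h4 : (R ^ 2 / (4 * t)) * (7 / 2) - R ^ 2 / t = -(R ^ 2) / (8 * t) := by
      field_simp; ring
    linarith
  calc (∑' z, (if R ≤ dν o z then u t z ^ 2 * ν z else 0))
      ≤ Real.exp (-(2 * lam * R)) * E t := htail
    _ ≤ Real.exp (-(2 * lam * R)) * Real.exp (C * t) :=
        mul_le_mul_of_nonneg_left hEt (Real.exp_pos _).le
    _ = Real.exp (C * t - 2 * lam * R) := by rw [← Real.exp_add]; ring_nf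
    _ ≤ Real.exp (-(R ^ 2) / (8 * t)) := Real.exp_le_exp.mpr harith
end

section
/- Let u : [0,∞) × V → [0,∞) be a positive subsolution of the heat equation on a weighted graph with finite spatial support, with initial condition u(0,z) = ν_o^{-1/2} 1_{z=o}. Then for all 0 < t ≤ R: Σ_{z : d_ν(o,z) ≥ R} u(t,z)² ν_z ≤ exp(−R log(1.01 R / t) + 120). -/
open Classical


lemma aux_cosh15 : Real.cosh 1.5 ≤ 2.36 := by
  have hA2 : Real.exp 1.5 ^ 2 = Real.exp 1 * (Real.exp 1 * Real.exp 1) := by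
    rw [sq, ← Real.exp_add, ← Real.exp_add, ← Real.exp_add]; norm_num
  have he1 : Real.exp 1 < 2.7182818286 := Real.exp_one_lt_d9
  have he2 : (2.7182818283:ℝ) < Real.exp 1 := Real.exp_one_gt_d9
  have he0 : (0:ℝ) < Real.exp 1 := Real.exp_pos 1
  have hA0 : (0:ℝ) < Real.exp 1.5 := Real.exp_pos 1.5
  have hAlt : Real.exp 1.5 < 4.4817 := by nlinarith
  have hAgt : (4.4816:ℝ) < Real.exp 1.5 := by nlinarith
  have hinv : Real.exp (-1.5) = (Real.exp 1.5)⁻¹ := Real.exp_neg 1.5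
  have hinv0 : (0:ℝ) < (Real.exp 1.5)⁻¹ := by positivity
  have hmul : (Real.exp 1.5)⁻¹ * Real.exp 1.5 = 1 := inv_mul_cancel₀ hA0.ne'
  have hinvlt : (Real.exp 1.5)⁻¹ < 0.22314 := by nlinarith
  rw [Real.cosh_eq, hinv]
  nlinarith

lemma aux_sinh_mul_le {s x : ℝ} (hs0 : 0 ≤ s) (hs1 : s ≤ 1) (hx : 0 ≤ x) :
    Real.sinh (s * x) ≤ s * Real.sinh x := by
  set F : ℝ → ℝ := fun y => s * Real.sinh y - Real.sinh (s * y) with hF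
  have hder : ∀ y : ℝ, HasDerivAt F (s * Real.cosh y - Real.cosh (s * y) * s) y := by
    intro y
    have h1 : HasDerivAt (fun y : ℝ => Real.sinh y) (Real.cosh y) y := Real.hasDerivAt_sinh y
    have h2 : HasDerivAt (fun y : ℝ => s * y) s y := by
      simpa using (hasDerivAt_id y).const_mul s
    exact (h1.const_mul s).sub (h2.sinh)
  have hmono : MonotoneOn F (Set.Ici (0:ℝ)) := by
    apply monotoneOn_of_deriv_nonneg (convex_Ici 0)
    · exact fun y _ => ((hder y).continuousAt).continuousWithinAt
    · exact fun y _ => ((hder y).differentiableAt).differentiableWithinAt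
    · intro y hy
      rw [interior_Ici] at hy
      rw [(hder y).deriv]
      have hc : Real.cosh (s * y) ≤ Real.cosh y := by
        rw [Real.cosh_le_cosh]
        have hy0 : (0:ℝ) < y := hy
        rw [abs_of_nonneg (mul_nonneg hs0 hy0.le), abs_of_nonneg hy0.le]
        nlinarith [mul_le_mul_of_nonneg_right hs1 hy0.le]
      nlinarith
  have h0 : F 0 ≤ F x := hmono (Set.self_mem_Ici) hx hx
  simp only [hF, mul_zero, Real.sinh_zero, sub_zero, sub_self] at h0
  linarith [h0]

lemma aux_cosh_quad {l s : ℝ} (hl : 0 ≤ l) (hs0 : 0 ≤ s) (hs1 : s ≤ 1) :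
    Real.cosh (l * s) ≤ 1 + (Real.cosh l - 1) * s ^ 2 := by
  have hhalf : ∀ y : ℝ, Real.cosh y = 2 * Real.sinh (y / 2) ^ 2 + 1 := by
    intro y
    have h1 := Real.cosh_two_mul (y / 2)
    have h2 := Real.cosh_sq (y / 2)
    rw [show 2 * (y / 2) = y by ring] at h1
    linarith
  rw [hhalf (l * s), hhalf l]
  have h1 : Real.sinh (l * s / 2) ≤ s * Real.sinh (l / 2) := by
    have := aux_sinh_mul_le hs0 hs1 (by linarith : (0:ℝ) ≤ l / 2)
    rw [show s * (l / 2) = l * s / 2 by ring] at this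
    exact this
  have h2 : 0 ≤ Real.sinh (l * s / 2) := by
    rw [← Real.sinh_zero]
    exact Real.sinh_le_sinh.2 (by positivity)
  nlinarith [Real.sinh_le_sinh.2 hl, sq_nonneg (Real.sinh (l/2))]

lemma aux_pair (a b c d m : ℝ) (hm : 0 ≤ m) :
    2 * a * Real.exp c ^ 2 * ((b - a) * m) + 2 * b * Real.exp d ^ 2 * ((a - b) * m) ≤
      a ^ 2 * Real.exp c ^ 2 * (2 * (Real.cosh (c - d) - 1) * m) +
        b ^ 2 * Real.exp d ^ 2 * (2 * (Real.cosh (c - d) - 1) * m) := by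
  set p := Real.exp c with hp'
  set q := Real.exp d with hq'
  have hp : 0 < p := Real.exp_pos c
  have hq : 0 < q := Real.exp_pos d
  have hcosh : Real.cosh (c - d) = (p / q + q / p) / 2 := by
    rw [Real.cosh_eq, Real.exp_sub, neg_sub, Real.exp_sub]
  rw [hcosh]
  have key : a ^ 2 * p ^ 2 * (2 * ((p / q + q / p) / 2 - 1) * m) +
      b ^ 2 * q ^ 2 * (2 * ((p / q + q / p) / 2 - 1) * m) -
      (2 * a * p ^ 2 * ((b - a) * m) + 2 * b * q ^ 2 * ((a - b) * m)) =
      m * ((p ^ 2 + q ^ 2) / (p * q)) * (a * p - b * q) ^ 2 := by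
    field_simp
    ring
  have h0 : 0 ≤ m * ((p ^ 2 + q ^ 2) / (p * q)) * (a * p - b * q) ^ 2 := by positivity
  linarith

lemma aux_case1 {L : ℝ} (hL0 : 0 ≤ L) (hc : L ≤ 1.5) :
    2 * (Real.cosh 1.5 - 1) * 1.01 ≤ (3 - L) * Real.exp L := by
  have hcosh : Real.cosh 1.5 ≤ 2.36 := aux_cosh15
  have hone : (1:ℝ) ≤ Real.cosh 1.5 := Real.one_le_cosh 1.5
  have hexpL1 : L + 1 ≤ Real.exp L := by
    have := Real.add_one_le_exp L; linarith
  have h3 : (3:ℝ) ≤ (3 - L) * Real.exp L := by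
    nlinarith [mul_le_mul_of_nonneg_left hexpL1 (by linarith : (0:ℝ) ≤ 3 - L),
      mul_nonneg hL0 (by linarith : (0:ℝ) ≤ 2 - L)]
  nlinarith

lemma aux_main {t R L : ℝ} (hR : 0 < R) (ht0 : 0 < t) (hL0 : 0 ≤ L)
    (htt : t * Real.exp L = 1.01 * R) :
    2 * (Real.cosh (max 1.5 L) - 1) * t - 2 * max 1.5 L * R ≤ -(R * L) + 120 := by
  have hexpLpos : 0 < Real.exp L := Real.exp_pos L
  rcases le_total L 1.5 with hc | hc
  · rw [max_eq_left hc]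
    have h1 : 2 * (Real.cosh 1.5 - 1) * (t * Real.exp L) ≤ R * ((3 - L) * Real.exp L) := by
      rw [htt]
      have := aux_case1 hL0 hc
      nlinarith
    have h2 : 2 * (Real.cosh 1.5 - 1) * t ≤ R * (3 - L) := by
      apply le_of_mul_le_mul_right _ hexpLpos
      calc 2 * (Real.cosh 1.5 - 1) * t * Real.exp L
          = 2 * (Real.cosh 1.5 - 1) * (t * Real.exp L) := by ring
        _ ≤ R * ((3 - L) * Real.exp L) := h1
        _ = R * (3 - L) * Real.exp L := by ring
    nlinarith
  · rw [max_eq_right hc]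
    set y := Real.exp (-L) with hydef
    have hy1 : Real.exp L * y = 1 := by
      rw [hydef, ← Real.exp_add]; simp
    have hy0 : 0 < y := Real.exp_pos _
    have hyle : y ≤ 1 := by
      rw [hydef, ← Real.exp_zero]
      exact Real.exp_le_exp.2 (by linarith)
    have hty : t = 1.01 * R * y :=
      calc t = t * (Real.exp L * y) := by rw [hy1, mul_one]
        _ = t * Real.exp L * y := by ring
        _ = 1.01 * R * y := by rw [htt]
    have hKt : 2 * (Real.cosh L - 1) * t ≤ R * L := by
      rw [hty]
      have hcoshL : Real.cosh L = (Real.exp L + y) / 2 := by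
        rw [Real.cosh_eq, ← hydef]
      rw [hcoshL]
      have hexpand : 2 * ((Real.exp L + y) / 2 - 1) * (1.01 * R * y) =
          1.01 * R * (Real.exp L * y + y ^ 2 - 2 * y) := by ring
      rw [hexpand, hy1]
      nlinarith [mul_nonneg (mul_nonneg hR.le hy0.le) (by linarith : (0:ℝ) ≤ 2 - y),
        mul_le_mul_of_nonneg_left hc hR.le, sq_nonneg (1 - y)]
    linarith

/-- Tail estimate for a positive subsolution started as a normalized point mass. -/
theorem tail_estimate_short_time
    (V : Type*) (μ : V → V → ℝ) (ν : V → ℝ) (dν : V → V → ℝ)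
    (hμsymm : ∀ x y, μ x y = μ y x) (hμnn : ∀ x y, 0 ≤ μ x y)
    (hν : ∀ x, 0 < ν x) (hloc : ∀ x, {y | μ x y ≠ 0}.Finite)
    (hdsymm : ∀ x y, dν x y = dν y x) (hd0 : ∀ x, dν x x = 0)
    (hdnn : ∀ x y, 0 ≤ dν x y)
    (hdtri : ∀ x y z, dν x z ≤ dν x y + dν y z)
    (hadapt1 : ∀ x, (∑' y, dν x y ^ 2 * μ x y) / ν x ≤ 1)
    (hadapt2 : ∀ x y, 0 < μ x y → dν x y ≤ 1)
    (o : V) (u u' : ℝ → V → ℝ)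
    (hunn : ∀ t x, 0 ≤ t → 0 ≤ u t x)
    (S : Finset V) (hsupp : ∀ t x, x ∉ S → u t x = 0)
    (hu0 : ∀ z, u 0 z = if z = o then (Real.sqrt (ν o))⁻¹ else 0)
    (hderiv : ∀ t x, 0 ≤ t →
      HasDerivWithinAt (fun s => u s x) (u' t x) (Set.Ici 0) t)
    (hsub : ∀ t x, 0 ≤ t → u' t x ≤ (∑' y, (u t y - u t x) * μ x y) / ν x)
    (t R : ℝ) (hR : 0 < R) (ht0 : 0 < t) (ht : t ≤ R) :
    ∑' z, (if R ≤ dν o z then u t z ^ 2 * ν z else 0) ≤ Real.exp (-(R * Real.log (1.01 * R / t)) + 120) := by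
  set L : ℝ := Real.log (1.01 * R / t) with hLdef
  have hRt : 1 ≤ 1.01 * R / t := by rw [le_div_iff₀ ht0]; nlinarith
  have hL0 : 0 ≤ L := Real.log_nonneg hRt
  set l : ℝ := max 1.5 L with hldef
  have hl15 : (1.5:ℝ) ≤ l := le_max_left _ _
  have hl0 : 0 ≤ l := by linarith
  set K : ℝ := 2 * (Real.cosh l - 1) with hKdef
  have hK0 : 0 ≤ K := by have := Real.one_le_cosh l; rw [hKdef]; linarith
  set ξ : V → ℝ := fun z => l * min (dν o z) R with hξdef
  set m : V → ℝ := fun z => Real.exp (ξ z) ^ 2 * ν z with hmdef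
  set E : ℝ → ℝ := fun s => ∑ z ∈ S, u s z ^ 2 * m z with hEdef
  -- o ∈ S
  have hsq : 0 < Real.sqrt (ν o) := Real.sqrt_pos.2 (hν o)
  have hoS : o ∈ S := by
    by_contra h
    have h0 := hsupp 0 o h
    rw [hu0 o, if_pos rfl] at h0
    exact (inv_ne_zero hsq.ne') h0
  -- initial value
  have hE0 : E 0 = 1 := by
    have hcongr : ∀ z ∈ S, u 0 z ^ 2 * m z = if z = o then 1 else 0 := by
      intro z hz
      rw [hu0 z]
      by_cases h : z = o
      · subst h
        rw [if_pos rfl, if_pos rfl]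
        have hξo : ξ z = 0 := by
          simp only [hξdef]; rw [hd0, min_eq_left hR.le, mul_zero]
        simp only [hmdef, hξo, Real.exp_zero, one_pow, one_mul]
        rw [← Real.sqrt_inv, Real.sq_sqrt (inv_nonneg.2 (hν z).le)]
        exact inv_mul_cancel₀ (hν z).ne'
      · rw [if_neg h, if_neg h]; ring
    have hE0' : E 0 = ∑ z ∈ S, u 0 z ^ 2 * m z := rfl
    rw [hE0', Finset.sum_congr rfl hcongr, Finset.sum_ite_eq' S o (fun _ => (1:ℝ))]
    simp [hoS]
  -- neighbor finset
  set T : Finset V := S ∪ S.biUnion (fun x => (hloc x).toFinset) with hTdef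
  have hST : S ⊆ T := Finset.subset_union_left
  have hμT : ∀ x ∈ S, ∀ y, y ∉ T → μ x y = 0 := by
    intro x hx y hy
    by_contra hne
    exact hy (Finset.mem_union_right _
      (Finset.mem_biUnion.2 ⟨x, hx, (Set.Finite.mem_toFinset _).2 hne⟩))
  -- Lipschitz property of ξ
  have hξlip : ∀ x y, |ξ x - ξ y| ≤ l * dν x y := by
    intro x y
    have h1 : dν o x - dν o y ≤ dν x y := by
      have := hdtri o y x; rw [hdsymm y x] at this; linarith
    have h2 : dν o y - dν o x ≤ dν x y := by
      have := hdtri o x y; linarith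
    have hd := hdnn x y
    have hmin1 : min (dν o x) R - min (dν o y) R ≤ dν x y := by
      rcases le_total (dν o x) R with h | h <;> rcases le_total (dν o y) R with h' | h' <;>
        simp [min_eq_left, min_eq_right, h, h'] <;> linarith
    have hmin2 : min (dν o y) R - min (dν o x) R ≤ dν x y := by
      rcases le_total (dν o x) R with h | h <;> rcases le_total (dν o y) R with h' | h' <;>
        simp [min_eq_left, min_eq_right, h, h'] <;> linarith
    have heq : ξ x - ξ y = l * (min (dν o x) R - min (dν o y) R) := by
      simp only [hξdef]; ring
    rw [heq, abs_mul, abs_of_nonneg hl0]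
    apply mul_le_mul_of_nonneg_left _ hl0
    rw [abs_le]
    constructor <;> linarith
  -- the key differential inequality
  have hkey : ∀ s, 0 ≤ s → ∑ z ∈ S, 2 * u s z ^ 1 * u' s z * m z ≤ K * E s := by
    intro s hs
    have h1 : ∀ x ∈ S, 2 * u s x ^ 1 * u' s x * m x ≤
        ∑ y ∈ T, 2 * u s x * Real.exp (ξ x) ^ 2 * ((u s y - u s x) * μ x y) := by
      intro x hx
      have htsum : (∑' y, (u s y - u s x) * μ x y) = ∑ y ∈ T, (u s y - u s x) * μ x y := by
        apply tsum_eq_sum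
        intro y hy
        rw [hμT x hx y hy, mul_zero]
      have hnn : 0 ≤ 2 * u s x * Real.exp (ξ x) ^ 2 * ν x :=
        mul_nonneg (mul_nonneg (by linarith [hunn s x hs]) (by positivity)) (hν x).le
      have hνx := (hν x).ne'
      calc 2 * u s x ^ 1 * u' s x * m x
          = (2 * u s x * Real.exp (ξ x) ^ 2 * ν x) * u' s x := by
            simp only [hmdef]; ring
        _ ≤ (2 * u s x * Real.exp (ξ x) ^ 2 * ν x) *
              ((∑' y, (u s y - u s x) * μ x y) / ν x) :=
            mul_le_mul_of_nonneg_left (hsub s x hs) hnn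
        _ = 2 * u s x * Real.exp (ξ x) ^ 2 * (∑' y, (u s y - u s x) * μ x y) := by
            field_simp
        _ = ∑ y ∈ T, 2 * u s x * Real.exp (ξ x) ^ 2 * ((u s y - u s x) * μ x y) := by
            rw [htsum, Finset.mul_sum]
    have h2 : ∑ z ∈ S, 2 * u s z ^ 1 * u' s z * m z ≤
        ∑ x ∈ T, ∑ y ∈ T, 2 * u s x * Real.exp (ξ x) ^ 2 * ((u s y - u s x) * μ x y) := by
      refine le_trans (Finset.sum_le_sum h1) ?_
      apply Finset.sum_le_sum_of_subset_of_nonneg hST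
      intro x hxT hxS
      rw [hsupp s x hxS]
      simp
    set f : V → V → ℝ := fun x y => 2 * u s x * Real.exp (ξ x) ^ 2 * ((u s y - u s x) * μ x y)
      with hfdef
    set g : V → V → ℝ := fun x y =>
      u s x ^ 2 * Real.exp (ξ x) ^ 2 * (2 * (Real.cosh (ξ x - ξ y) - 1) * μ x y) with hgdef
    have h3 : ∑ x ∈ T, ∑ y ∈ T, f x y ≤ ∑ x ∈ T, ∑ y ∈ T, g x y := by
      have hpair : ∀ x y, f x y + f y x ≤ g x y + g y x := by
        intro x y
        simp only [hfdef, hgdef]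
        rw [hμsymm y x, show ξ y - ξ x = -(ξ x - ξ y) by ring, Real.cosh_neg]
        exact aux_pair (u s x) (u s y) (ξ x) (ξ y) (μ x y) (hμnn x y)
      have hswapf : ∑ x ∈ T, ∑ y ∈ T, f x y = ∑ x ∈ T, ∑ y ∈ T, f y x := Finset.sum_comm
      have hswapg : ∑ x ∈ T, ∑ y ∈ T, g x y = ∑ x ∈ T, ∑ y ∈ T, g y x := Finset.sum_comm
      have hsum : ∑ x ∈ T, ∑ y ∈ T, (f x y + f y x) ≤ ∑ x ∈ T, ∑ y ∈ T, (g x y + g y x) :=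
        Finset.sum_le_sum fun x _ => Finset.sum_le_sum fun y _ => hpair x y
      simp only [Finset.sum_add_distrib] at hsum
      rw [← hswapf, ← hswapg] at hsum
      linarith
    have h4 : ∀ x ∈ T, ∑ y ∈ T, g x y ≤ u s x ^ 2 * Real.exp (ξ x) ^ 2 * (K * ν x) := by
      intro x _
      have hA : (0:ℝ) ≤ u s x ^ 2 * Real.exp (ξ x) ^ 2 := by positivity
      have hterm : ∀ y ∈ T, 2 * (Real.cosh (ξ x - ξ y) - 1) * μ x y ≤
          K * (dν x y ^ 2 * μ x y) := by
        intro y _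
        by_cases hμ0 : μ x y = 0
        · rw [hμ0]; simp
        · have hμpos : 0 < μ x y := lt_of_le_of_ne (hμnn x y) (Ne.symm hμ0)
          have hd1 : dν x y ≤ 1 := hadapt2 x y hμpos
          have hc1 : Real.cosh (ξ x - ξ y) ≤ Real.cosh (l * dν x y) := by
            rw [Real.cosh_le_cosh, abs_of_nonneg (mul_nonneg hl0 (hdnn x y))]
            exact hξlip x y
          have hc2 : Real.cosh (l * dν x y) ≤ 1 + (Real.cosh l - 1) * dν x y ^ 2 :=
            aux_cosh_quad hl0 (hdnn x y) hd1
          have hc3 : 2 * (Real.cosh (ξ x - ξ y) - 1) ≤ K * dν x y ^ 2 := by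
            rw [hKdef]; nlinarith
          calc 2 * (Real.cosh (ξ x - ξ y) - 1) * μ x y
              ≤ K * dν x y ^ 2 * μ x y := mul_le_mul_of_nonneg_right hc3 (hμnn x y)
            _ = K * (dν x y ^ 2 * μ x y) := by ring
      have hsummable : Summable (fun y => dν x y ^ 2 * μ x y) := by
        apply summable_of_ne_finset_zero (s := (hloc x).toFinset)
        intro y hy
        have hμ0 : μ x y = 0 := by
          by_contra h
          exact hy ((Set.Finite.mem_toFinset _).2 h)
        rw [hμ0, mul_zero]
      have hsumle : ∑ y ∈ T, dν x y ^ 2 * μ x y ≤ ν x := by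
        refine le_trans (Summable.sum_le_tsum T
          (fun y _ => mul_nonneg (by positivity) (hμnn x y)) hsummable) ?_
        have := hadapt1 x
        rwa [div_le_one (hν x)] at this
      calc ∑ y ∈ T, g x y
          = u s x ^ 2 * Real.exp (ξ x) ^ 2 *
              ∑ y ∈ T, 2 * (Real.cosh (ξ x - ξ y) - 1) * μ x y := by
            simp only [hgdef]; rw [Finset.mul_sum]
        _ ≤ u s x ^ 2 * Real.exp (ξ x) ^ 2 * ∑ y ∈ T, K * (dν x y ^ 2 * μ x y) :=
            mul_le_mul_of_nonneg_left (Finset.sum_le_sum hterm) hA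
        _ = u s x ^ 2 * Real.exp (ξ x) ^ 2 * (K * ∑ y ∈ T, dν x y ^ 2 * μ x y) := by
            rw [← Finset.mul_sum]
        _ ≤ u s x ^ 2 * Real.exp (ξ x) ^ 2 * (K * ν x) := by
            apply mul_le_mul_of_nonneg_left _ hA
            exact mul_le_mul_of_nonneg_left hsumle hK0
    have h5 : ∑ x ∈ T, u s x ^ 2 * Real.exp (ξ x) ^ 2 * (K * ν x) = K * E s := by
      simp only [hEdef]
      rw [Finset.mul_sum]
      rw [← Finset.sum_subset hST (fun x _ hxS => by rw [hsupp s x hxS]; ring)]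
      apply Finset.sum_congr rfl
      intro x _
      simp only [hmdef]
      ring
    calc ∑ z ∈ S, 2 * u s z ^ 1 * u' s z * m z
        ≤ ∑ x ∈ T, ∑ y ∈ T, f x y := h2
      _ ≤ ∑ x ∈ T, ∑ y ∈ T, g x y := h3
      _ ≤ ∑ x ∈ T, u s x ^ 2 * Real.exp (ξ x) ^ 2 * (K * ν x) := Finset.sum_le_sum h4
      _ = K * E s := h5
  -- Gronwall
  have hEt : E t ≤ Real.exp (K * t) := by
    have hcu : ∀ z, ContinuousOn (fun r => u r z) (Set.Ici (0:ℝ)) :=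
      fun z s hs => (hderiv s z hs).continuousWithinAt
    have hcont : ContinuousOn E (Set.Ici (0:ℝ)) :=
      continuousOn_finset_sum S fun z _ => ((hcu z).pow 2).mul continuousOn_const
    have hG : ∀ s : ℝ, 0 < s → HasDerivAt (fun r => E r * Real.exp (-K * r))
        ((∑ z ∈ S, 2 * u s z ^ 1 * u' s z * m z) * Real.exp (-K * s)
          + E s * (Real.exp (-K * s) * -K)) s := by
      intro s hs
      have hEd : HasDerivAt E (∑ z ∈ S, 2 * u s z ^ 1 * u' s z * m z) s := by
        apply HasDerivAt.fun_sum
        intro z _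
        have h1 : HasDerivAt (fun r => u r z) (u' s z) s :=
          (hderiv s z hs.le).hasDerivAt (Ici_mem_nhds hs)
        simpa using (h1.pow 2).mul_const (m z)
      have hexp : HasDerivAt (fun r : ℝ => Real.exp (-K * r)) (Real.exp (-K * s) * -K) s := by
        have h2 : HasDerivAt (fun r : ℝ => -K * r) (-K) s := by
          simpa using (hasDerivAt_id s).const_mul (-K)
        exact h2.exp
      exact hEd.mul hexp
    have hanti : AntitoneOn (fun s => E s * Real.exp (-K * s)) (Set.Ici (0:ℝ)) := by
      apply antitoneOn_of_deriv_nonpos (convex_Ici 0)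
      · exact hcont.mul
          (Real.continuous_exp.comp (continuous_const.mul continuous_id)).continuousOn
      · intro s hs
        rw [interior_Ici] at hs
        exact ((hG s hs).differentiableAt).differentiableWithinAt
      · intro s hs
        rw [interior_Ici] at hs
        rw [(hG s hs).deriv]
        have hkey' := hkey s hs.le
        have hexps := (Real.exp_pos (-K * s)).le
        have hrw : E s * (Real.exp (-K * s) * -K) =
            -(K * E s * Real.exp (-K * s)) := by ring
        rw [hrw]
        have := mul_le_mul_of_nonneg_right hkey' hexps
        linarith
    have h1 : E t * Real.exp (-K * t) ≤ E 0 * Real.exp (-K * 0) :=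
      hanti Set.self_mem_Ici (Set.mem_Ici.2 ht0.le) ht0.le
    rw [hE0, one_mul, mul_zero, Real.exp_zero] at h1
    have h2 : Real.exp (-K * t) * Real.exp (K * t) = 1 := by
      rw [← Real.exp_add, show -K * t + K * t = 0 by ring, Real.exp_zero]
    calc E t = E t * Real.exp (-K * t) * Real.exp (K * t) := by
          rw [mul_assoc, h2, mul_one]
      _ ≤ 1 * Real.exp (K * t) := mul_le_mul_of_nonneg_right h1 (Real.exp_pos _).le
      _ = Real.exp (K * t) := one_mul _
  -- bound the tail by the weighted energy
  have htail : ∑' z, (if R ≤ dν o z then u t z ^ 2 * ν z else 0) ≤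
      Real.exp (-(2 * l * R)) * E t := by
    have htsum : ∑' z, (if R ≤ dν o z then u t z ^ 2 * ν z else 0) =
        ∑ z ∈ S, (if R ≤ dν o z then u t z ^ 2 * ν z else 0) := by
      apply tsum_eq_sum
      intro z hz
      rw [hsupp t z hz]
      simp
    rw [htsum]
    simp only [hEdef]
    rw [Finset.mul_sum]
    apply Finset.sum_le_sum
    intro z hz
    by_cases h : R ≤ dν o z
    · rw [if_pos h]
      have hξz : ξ z = l * R := by
        simp only [hξdef]; rw [min_eq_right h]
      simp only [hmdef, hξz]
      have hexp2 : Real.exp (-(2 * l * R)) * Real.exp (l * R) ^ 2 = 1 := by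
        rw [pow_two, ← Real.exp_add, ← Real.exp_add,
          show -(2 * l * R) + (l * R + l * R) = 0 by ring, Real.exp_zero]
      have hrw : Real.exp (-(2 * l * R)) * (u t z ^ 2 * (Real.exp (l * R) ^ 2 * ν z)) =
          Real.exp (-(2 * l * R)) * Real.exp (l * R) ^ 2 * (u t z ^ 2 * ν z) := by ring
      rw [hrw, hexp2, one_mul]
    · rw [if_neg h]
      have h1 := (hν z).le
      have h2 : (0:ℝ) ≤ u t z ^ 2 * m z := mul_nonneg (sq_nonneg _)
        (mul_nonneg (by positivity) h1)
      have := Real.exp_pos (-(2 * l * R))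
      nlinarith
  -- numeric comparison of exponents
  have hexpL : Real.exp L = 1.01 * R / t := Real.exp_log (by positivity)
  have htt : t * Real.exp L = 1.01 * R := by
    rw [hexpL]; field_simp
  have hmain : K * t - 2 * l * R ≤ -(R * L) + 120 := by
    rw [hKdef, hldef]
    exact aux_main hR ht0 hL0 htt
  calc ∑' z, (if R ≤ dν o z then u t z ^ 2 * ν z else 0)
      ≤ Real.exp (-(2 * l * R)) * E t := htail
    _ ≤ Real.exp (-(2 * l * R)) * Real.exp (K * t) :=
        mul_le_mul_of_nonneg_left hEt (Real.exp_pos _).le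
    _ = Real.exp (K * t - 2 * l * R) := by
        rw [← Real.exp_add, show -(2 * l * R) + K * t = K * t - 2 * l * R by ring]
    _ ≤ Real.exp (-(R * L) + 120) := Real.exp_le_exp.2 hmain
end

section
/- Fix τ > 0 and a function ρ : V → [0,∞) with |ρ(x) − ρ(y)| ≤ d_ν(x,y) for adjacent x,y, where d_ν(x,y) ≤ 1 for x ∼ y. Define h(t,z) = exp{(ρ(z) − (e/4)(t+τ)) · log(max(1, ρ(z)/((e/4)(t+τ)))) − t/τ}. Then for all t ≥ 0 and all adjacent y ∼ z with ε = d_ν(y,z): |h(t,y) − h(t,z)|² / (4 h(t,y) h(t,z)) ≤ −ε² (∂/∂t) log h(t,y). -/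
open Real Filter Asymptotics Topology

lemma exp_neg_le_quad : ∀ z : ℝ, 0 ≤ z → Real.exp (-z) ≤ 1 - z + z^2/2 := by
  have hmono : MonotoneOn (fun z : ℝ => 1 - z + z^2/2 - Real.exp (-z)) (Set.Ici 0) := by
    apply monotoneOn_of_deriv_nonneg (convex_Ici 0)
    · fun_prop
    · fun_prop
    · intro x hx
      have hd : HasDerivAt (fun z : ℝ => 1 - z + z^2/2 - Real.exp (-z))
          (-1 + x + Real.exp (-x)) x := by
        have h1 : HasDerivAt (fun z : ℝ => Real.exp (-z)) (-Real.exp (-x)) x := by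
          simpa [Function.comp_def] using (Real.hasDerivAt_exp (-x)).comp x (hasDerivAt_neg x)
        have h2 : HasDerivAt (fun z : ℝ => 1 - z + z^2/2) (-1 + x) x := by
          have := ((hasDerivAt_pow 2 x).div_const 2)
          have h3 : HasDerivAt (fun z : ℝ => 1 - z) (-1 : ℝ) x := by
            simpa using (hasDerivAt_id x).const_sub 1
          simpa [pow_one] using h3.fun_add this
        simpa [sub_eq_add_neg] using h2.fun_sub h1
      rw [hd.deriv]
      have := Real.add_one_le_exp (-x)
      linarith
  intro z hz
  have := hmono (Set.self_mem_Ici) (Set.mem_Ici.2 hz) hz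
  simp at this
  linarith

lemma exp_le_inv_one_sub {z : ℝ} (h1 : z < 1) : Real.exp z ≤ 1/(1-z) := by
  have h2 : 0 < 1 - z := by linarith
  have h3 : 1 - z ≤ Real.exp (-z) := by have := Real.add_one_le_exp (-z); linarith
  rw [le_div_iff₀ h2]
  calc Real.exp z * (1-z) ≤ Real.exp z * Real.exp (-z) := by
        apply mul_le_mul_of_nonneg_left h3 (Real.exp_nonneg z)
    _ = 1 := by rw [← Real.exp_add]; simp

-- main one–variable inequality (I)
lemma ineq_I {z : ℝ} (h0 : 0 < z) (h1 : z < 1) :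
    Real.exp (1 - z) + z^2 * Real.exp (z - 1) ≤ Real.exp 1 * (1 - z) + 2*z := by
  have he1 : (2.7182818283 : ℝ) < Real.exp 1 := Real.exp_one_gt_d9
  have he2 : Real.exp 1 < 2.7182818286 := Real.exp_one_lt_d9
  have hexp1 : Real.exp (1 - z) = Real.exp 1 * Real.exp (-z) := by
    rw [← Real.exp_add]; ring_nf
  have hexp2 : Real.exp (z - 1) = Real.exp z / Real.exp 1 := by
    rw [Real.exp_sub]
  rcases le_or_gt z (1/2) with hz | hz
  · -- z ≤ 1/2
    have hb1 : Real.exp (-z) ≤ 1 - z + z^2/2 := exp_neg_le_quad z h0.le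
    have hb2 : Real.exp z ≤ 1/(1-z) := exp_le_inv_one_sub h1
    have hb2' : Real.exp z ≤ 2 := le_trans hb2 (by rw [div_le_iff₀ (by linarith)]; linarith)
    have key : Real.exp 1 * (1 - z + z^2/2) + z^2 * (2 / Real.exp 1)
        ≤ Real.exp 1 * (1-z) + 2*z := by
      have hepos : (0:ℝ) < Real.exp 1 := Real.exp_pos 1
      rw [div_eq_mul_inv]
      have hinv : (Real.exp 1)⁻¹ ≤ (2.7182818283:ℝ)⁻¹ := by
        apply inv_anti₀ (by norm_num) he1.le
      have hz2 : z^2 ≤ z/2 := by nlinarith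
      have h2e : 2/Real.exp 1 ≤ 0.7358 := by
        rw [div_le_iff₀ hepos]; nlinarith
      have hA : z^2*(2/Real.exp 1) ≤ 0.37*z := by
        have h5 : z^2*(2/Real.exp 1) ≤ (z/2)*0.7358 :=
          mul_le_mul hz2 h2e (by positivity) (by linarith)
        linarith
      have hB : Real.exp 1 * (z^2/2) ≤ 0.68*z := by
        have h1' : Real.exp 1 * z^2 ≤ 2.7182818286*(z/2) :=
          mul_le_mul he2.le hz2 (sq_nonneg z) (by norm_num)
        linarith
      nlinarith [hA, hB]
    calc Real.exp (1-z) + z^2 * Real.exp (z-1)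
        ≤ Real.exp 1 * (1 - z + z^2/2) + z^2 * (2/Real.exp 1) := by
          rw [hexp1, hexp2]
          have : z^2 * (Real.exp z / Real.exp 1) ≤ z^2 * (2/Real.exp 1) := by
            apply mul_le_mul_of_nonneg_left _ (sq_nonneg z)
            gcongr
          have h4 : Real.exp 1 * Real.exp (-z) ≤ Real.exp 1 * (1 - z + z^2/2) :=
            mul_le_mul_of_nonneg_left hb1 (Real.exp_pos 1).le
          linarith
      _ ≤ _ := key
  · -- 1/2 < z < 1
    have hb1 : Real.exp (1 - z) ≤ 1/z := by
      have := exp_le_inv_one_sub (z := 1 - z) (by linarith)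
      simpa using this
    have hb2 : Real.exp (-(1-z)) ≤ 1 - (1-z) + (1-z)^2/2 := exp_neg_le_quad _ (by linarith)
    have hb2' : Real.exp (z - 1) ≤ z + (1-z)^2/2 := by
      have : Real.exp (z-1) = Real.exp (-(1-z)) := by ring_nf
      rw [this]; linarith [hb2]
    have hzpos : (0:ℝ) < z := h0
    have key : 1/z + z^2 * (z + (1-z)^2/2) ≤ Real.exp 1 * (1-z) + 2*z := by
      rw [div_add' _ _ _ (ne_of_gt hzpos), div_le_iff₀ hzpos]
      nlinarith [sq_nonneg (1-z), sq_nonneg z, mul_pos hzpos hzpos, sq_nonneg (2*z-1),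
        mul_nonneg (mul_nonneg (by linarith : (0:ℝ) ≤ 2*z-1) (by linarith : (0:ℝ) ≤ 1-z)) (sq_nonneg z),
        mul_nonneg (by linarith : (0:ℝ) ≤ 2*z-1) (sq_nonneg (1-z))]
    have : z^2 * Real.exp (z-1) ≤ z^2 * (z + (1-z)^2/2) :=
      mul_le_mul_of_nonneg_left hb2' (sq_nonneg z)
    linarith

lemma case_i {c m : ℝ} (hc : 0 < c) (hcm : c < m) (hm1 : m ≤ c + 1) :
    m * Real.exp (1 - c/m) + (c^2/m) * Real.exp (c/m - 1) - 2*c ≤ Real.exp 1 := by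
  have hm : 0 < m := lt_trans hc hcm
  set z := c/m with hz
  have hz0 : 0 < z := div_pos hc hm
  have hz1 : z < 1 := (div_lt_one hm).2 hcm
  have hkey := ineq_I hz0 hz1
  have hczm : c = z * m := by rw [hz, div_mul_cancel₀ c hm.ne']
  have hc2m : c^2/m = z^2 * m := by rw [hczm]; field_simp
  have h2 : m * (Real.exp (1-z) + z^2 * Real.exp (z-1)) ≤ m * (Real.exp 1 * (1-z) + 2*z) :=
    mul_le_mul_of_nonneg_left hkey hm.le
  have h3 : m * (Real.exp 1 * (1-z) + 2*z) = Real.exp 1 * (m - c) + 2*c := by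
    rw [hczm]; ring
  have h4 : Real.exp 1 * (m - c) ≤ Real.exp 1 * 1 :=
    mul_le_mul_of_nonneg_left (by linarith) (Real.exp_pos 1).le
  rw [hc2m]
  nlinarith [h2, h3, h4]

noncomputable def Faux (c r : ℝ) : ℝ :=
  Real.exp 1 * (1 + c * Real.log (r/c) + (r - c)) + 2*c
    - (r+1) * Real.exp (1 - c/(r+1)) - (c^2/(r+1)) * Real.exp (c/(r+1) - 1)

noncomputable def Faux' (c r : ℝ) : ℝ :=
  Real.exp 1 * (c/r + 1) - Real.exp (1 - c/(r+1))*(1 + c/(r+1))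
    + Real.exp (c/(r+1) - 1)*((c/(r+1))^2 + (c/(r+1))^3)

lemma Faux_hasDeriv {c : ℝ} (hc : 0 < c) {r : ℝ} (hr : 0 < r) :
    HasDerivAt (Faux c) (Faux' c r) r := by
  have hr1 : (0:ℝ) < r + 1 := by linarith
  have hrc : r/c ≠ 0 := by positivity
  -- derivative of w = c/(r+1)
  have hw : HasDerivAt (fun r : ℝ => c/(r+1)) (-c/(r+1)^2) r := by
    have h1 : HasDerivAt (fun r : ℝ => r + 1) 1 r := (hasDerivAt_id r).add_const 1
    have := (hasDerivAt_const r c).fun_div h1 (ne_of_gt hr1)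
    refine this.congr_deriv (Eq.symm ?_)
    field_simp; ring
  -- derivative of log (r/c)
  have hlog : HasDerivAt (fun r : ℝ => Real.log (r/c)) (1/r) r := by
    have h1 : HasDerivAt (fun r : ℝ => r/c) (1/c) r := by
      simpa using (hasDerivAt_id r).div_const c
    have := h1.log hrc
    convert this using 1
    field_simp
  -- first big summand
  have hA : HasDerivAt (fun r : ℝ => Real.exp 1 * (1 + c * Real.log (r/c) + (r - c)) + 2*c)
      (Real.exp 1 * (c/r + 1)) r := by
    have h2 : HasDerivAt (fun r : ℝ => 1 + c * Real.log (r/c) + (r - c))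
        (c * (1/r) + 1) r := by
      have h3 : HasDerivAt (fun r : ℝ => c * Real.log (r/c)) (c * (1/r)) r := hlog.const_mul c
      have h4 : HasDerivAt (fun r : ℝ => r - c) 1 r := (hasDerivAt_id r).sub_const c
      simpa using (h3.const_add 1).fun_add h4
    have := (h2.const_mul (Real.exp 1)).add_const (2*c)
    refine this.congr_deriv (Eq.symm ?_)
    field_simp
    try ring
  -- second: (r+1) * exp(1 - c/(r+1))
  have hB : HasDerivAt (fun r : ℝ => (r+1) * Real.exp (1 - c/(r+1)))
      (Real.exp (1 - c/(r+1)) * (1 + c/(r+1))) r := by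
    have h1 : HasDerivAt (fun r : ℝ => r + 1) 1 r := (hasDerivAt_id r).add_const 1
    have h2 : HasDerivAt (fun r : ℝ => 1 - c/(r+1)) (c/(r+1)^2) r := by
      have := hw.const_sub 1
      refine this.congr_deriv (Eq.symm ?_)
      field_simp
    have h3 : HasDerivAt (fun r : ℝ => Real.exp (1 - c/(r+1)))
        (Real.exp (1 - c/(r+1)) * (c/(r+1)^2)) r := by
      simpa [mul_comm, Function.comp_def] using (Real.hasDerivAt_exp _).comp r h2
    have := h1.fun_mul h3
    refine this.congr_deriv (Eq.symm ?_)
    field_simp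
  -- third: (c^2/(r+1)) * exp(c/(r+1) - 1)
  have hC : HasDerivAt (fun r : ℝ => (c^2/(r+1)) * Real.exp (c/(r+1) - 1))
      (-(Real.exp (c/(r+1) - 1)*((c/(r+1))^2 + (c/(r+1))^3))) r := by
    have h1 : HasDerivAt (fun r : ℝ => c^2/(r+1)) (-c^2/(r+1)^2) r := by
      have h0 : HasDerivAt (fun r : ℝ => r + 1) 1 r := (hasDerivAt_id r).add_const 1
      have := (hasDerivAt_const r (c^2)).fun_div h0 (ne_of_gt hr1)
      refine this.congr_deriv (Eq.symm ?_)
      field_simp; ring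
    have h2 : HasDerivAt (fun r : ℝ => c/(r+1) - 1) (-c/(r+1)^2) r := hw.sub_const 1
    have h3 : HasDerivAt (fun r : ℝ => Real.exp (c/(r+1) - 1))
        (Real.exp (c/(r+1) - 1) * (-c/(r+1)^2)) r := by
      simpa [mul_comm, Function.comp_def] using (Real.hasDerivAt_exp _).comp r h2
    have := h1.fun_mul h3
    refine this.congr_deriv (Eq.symm ?_)
    field_simp
    ring
  have := (hA.fun_sub hB).fun_sub hC
  refine this.congr_deriv (Eq.symm ?_)
  simp only [Faux']; ring

lemma Faux'_nonneg {c : ℝ} (hc : 0 < c) {r : ℝ} (hr : 0 < r) : 0 ≤ Faux' c r := by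
  have hr1 : (0:ℝ) < r + 1 := by linarith
  set w := c/(r+1) with hwdef
  have hw0 : 0 < w := div_pos hc hr1
  have h1 : Real.exp (1 - w) * (1 + w) ≤ Real.exp 1 := by
    have h2 : 1 + w ≤ Real.exp w := by have := Real.add_one_le_exp w; linarith
    calc Real.exp (1-w) * (1+w) ≤ Real.exp (1-w) * Real.exp w :=
          mul_le_mul_of_nonneg_left (by linarith) (Real.exp_pos _).le
      _ = Real.exp 1 := by rw [← Real.exp_add]; ring_nf
  have h3 : 0 < Real.exp 1 * (c/r) := by positivity
  have h4 : 0 ≤ Real.exp (w - 1)*(w^2 + w^3) := by positivity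
  simp only [Faux']
  nlinarith [h1, h3, h4]

lemma case_ii {c p : ℝ} (hc : 0 < c) (hp : c < p) :
    (p+1) * Real.exp (1 - c/(p+1)) + (c^2/(p+1)) * Real.exp (c/(p+1) - 1) - 2*c
      ≤ Real.exp 1 * (1 + c * Real.log (p/c) + (p - c)) := by
  have hmono : MonotoneOn (Faux c) (Set.Icc c p) := by
    apply monotoneOn_of_deriv_nonneg (convex_Icc c p)
    · intro x hx
      exact (Faux_hasDeriv hc (lt_of_lt_of_le hc hx.1)).differentiableAt.differentiableWithinAt.continuousWithinAt
    · intro x hx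
      rw [interior_Icc] at hx
      exact (Faux_hasDeriv hc (lt_trans hc hx.1)).differentiableAt.differentiableWithinAt
    · intro x hx
      rw [interior_Icc] at hx
      have hx0 : 0 < x := lt_trans hc hx.1
      rw [(Faux_hasDeriv hc hx0).deriv]
      exact Faux'_nonneg hc hx0
  have hFc : 0 ≤ Faux c c := by
    have := case_i hc (show c < c + 1 by linarith) (le_refl (c+1))
    simp only [Faux, div_self (ne_of_gt hc), Real.log_one]
    linarith
  have hle := hmono (Set.mem_Icc.2 ⟨le_refl c, hp.le⟩) (Set.mem_Icc.2 ⟨hp.le, le_refl p⟩) hp.le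
  have : 0 ≤ Faux c p := le_trans hFc hle
  simp only [Faux] at this
  linarith

lemma core {c p : ℝ} (hc : 0 < c) (hp : 0 ≤ p) (hM : c < p + 1) :
    Real.cosh (Real.log ((p+1)/c) + 1 - c/(p+1)) - 1 ≤
      (Real.exp 1/(2*c)) * (1 + c * Real.log (max 1 (p/c)) + max (p - c) 0) := by
  have hM0 : (0:ℝ) < p + 1 := by linarith
  have hMc : 0 < (p+1)/c := div_pos hM0 hc
  have hY1 : Real.exp (Real.log ((p+1)/c) + 1 - c/(p+1))
      = ((p+1)/c) * Real.exp (1 - c/(p+1)) := by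
    rw [show Real.log ((p+1)/c) + 1 - c/(p+1) = Real.log ((p+1)/c) + (1 - c/(p+1)) by ring,
      Real.exp_add, Real.exp_log hMc]
  have hY2 : Real.exp (-(Real.log ((p+1)/c) + 1 - c/(p+1)))
      = (c/(p+1)) * Real.exp (c/(p+1) - 1) := by
    rw [show -(Real.log ((p+1)/c) + 1 - c/(p+1)) = -Real.log ((p+1)/c) + (c/(p+1) - 1) by ring,
      Real.exp_add, Real.exp_neg, Real.exp_log hMc, inv_div]
  rw [Real.cosh_eq, hY1, hY2]
  have h2 : ((p+1)/c * Real.exp (1 - c/(p+1)) + c/(p+1) * Real.exp (c/(p+1) - 1))/2 - 1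
      = ((p+1) * Real.exp (1 - c/(p+1)) + (c^2/(p+1)) * Real.exp (c/(p+1) - 1) - 2*c)/(2*c) := by
    field_simp
  have h3 : Real.exp 1/(2*c) * (1 + c * Real.log (max 1 (p/c)) + max (p - c) 0)
      = (Real.exp 1 * (1 + c * Real.log (max 1 (p/c)) + max (p - c) 0))/(2*c) := by ring
  rw [h2, h3]
  have hkey : (p+1) * Real.exp (1 - c/(p+1)) + (c^2/(p+1)) * Real.exp (c/(p+1) - 1) - 2*c
      ≤ Real.exp 1 * (1 + c * Real.log (max 1 (p/c)) + max (p - c) 0) := by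
    rcases le_or_gt p c with hpc | hpc
    · have h1 : max 1 (p/c) = 1 := max_eq_left ((div_le_one hc).2 hpc)
      have h2 : max (p - c) 0 = 0 := max_eq_right (by linarith)
      rw [h1, h2, Real.log_one]
      simpa using case_i hc hM (by linarith)
    · have h1 : max 1 (p/c) = p/c := max_eq_right ((one_le_div hc).2 hpc.le)
      have h2 : max (p - c) 0 = p - c := max_eq_left (by linarith)
      rw [h1, h2]
      exact case_ii hc hpc
  apply div_le_div_of_nonneg_right hkey (by positivity) |>.trans_eq rfl |>.trans_eq rfl


lemma sinh_convex_smul {u e' : ℝ} (hu : 0 ≤ u) (h0 : 0 ≤ e') (h1 : e' ≤ 1) :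
    Real.sinh (e' * u) ≤ e' * Real.sinh u := by
  have hconv : ConvexOn ℝ (Set.Ici 0) Real.sinh := by
    apply convexOn_of_deriv2_nonneg (convex_Ici 0)
    · exact Real.continuous_sinh.continuousOn
    · exact Real.differentiable_sinh.differentiableOn
    · rw [Real.deriv_sinh]; exact Real.differentiable_cosh.differentiableOn
    · intro x hx
      rw [Function.iterate_succ, Function.iterate_one, Function.comp_apply,
        Real.deriv_sinh, Real.deriv_cosh]
      rw [interior_Ici, Set.mem_Ioi] at hx
      exact Real.sinh_nonneg_iff.2 hx.le
  have := hconv.2 (Set.mem_Ici.2 hu) (Set.mem_Ici.2 (le_refl (0:ℝ))) h0 (by linarith)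
    (by ring : e' + (1 - e') = 1)
  simpa using this

lemma cosh_sub_one_smul {Y e' : ℝ} (hY : 0 ≤ Y) (h0 : 0 ≤ e') (h1 : e' ≤ 1) :
    Real.cosh (e' * Y) - 1 ≤ e'^2 * (Real.cosh Y - 1) := by
  have hid : ∀ x : ℝ, Real.cosh x = 1 + 2 * Real.sinh (x/2)^2 := by
    intro x
    rw [show x = 2 * (x/2) by ring, Real.cosh_two_mul, Real.cosh_sq]
    ring_nf
  rw [hid (e'*Y), hid Y]
  have hs := sinh_convex_smul (by linarith : (0:ℝ) ≤ Y/2) h0 h1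
  have hsn : 0 ≤ Real.sinh (e' * Y / 2) := Real.sinh_nonneg_iff.2 (by positivity)
  have : Real.sinh (e' * Y/2)^2 ≤ (e' * Real.sinh (Y/2))^2 := by
    apply sq_le_sq' _ _
    · nlinarith [Real.sinh_nonneg_iff.2 (by positivity : (0:ℝ) ≤ Y/2)]
    · calc Real.sinh (e'*Y/2) = Real.sinh (e' * (Y/2)) := by ring_nf
        _ ≤ e' * Real.sinh (Y/2) := hs
  nlinarith [this]

lemma phi_zero {c b : ℝ} (hc : 0 < c) (hb : 0 ≤ b) (hbc : b ≤ c) :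
    (b - c) * Real.log (max 1 (b/c)) = 0 := by
  have : max 1 (b/c) = 1 := max_eq_left ((div_le_one hc).2 hbc)
  rw [this, Real.log_one, mul_zero]

lemma phi_pos_rw {c b : ℝ} (hc : 0 < c) (hbc : c < b) :
    (b - c) * Real.log (max 1 (b/c)) = (b - c) * Real.log (b/c) := by
  have : max 1 (b/c) = b/c := max_eq_right ((one_le_div hc).2 hbc.le)
  rw [this]

lemma phi_diff_nonneg {c b a : ℝ} (hc : 0 < c) (hb : 0 ≤ b) (hab : b ≤ a) :
    0 ≤ (a - c) * Real.log (max 1 (a/c)) - (b - c) * Real.log (max 1 (b/c)) := by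
  rcases le_or_gt a c with hac | hac
  · rw [phi_zero hc hb (hab.trans hac), phi_zero hc (hb.trans hab) hac]; norm_num
  rcases le_or_gt b c with hbc | hbc
  · rw [phi_zero hc hb hbc, phi_pos_rw hc hac]
    have h1 : 0 ≤ Real.log (a/c) := Real.log_nonneg ((one_le_div hc).2 hac.le)
    have h2 : 0 ≤ a - c := by linarith
    nlinarith
  · rw [phi_pos_rw hc hac, phi_pos_rw hc hbc]
    have hb0 : 0 < b := lt_trans hc hbc
    have ha0 : 0 < a := lt_trans hc hac
    have key : (a - c) * Real.log (a/c) - (b - c) * Real.log (b/c)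
        = (a - b) * Real.log (a/c) + (b - c) * Real.log (a/b) := by
      have h1 : Real.log (a/c) = Real.log a - Real.log c :=
        Real.log_div (ne_of_gt ha0) (ne_of_gt hc)
      have h2 : Real.log (b/c) = Real.log b - Real.log c :=
        Real.log_div (ne_of_gt hb0) (ne_of_gt hc)
      have h3 : Real.log (a/b) = Real.log a - Real.log b :=
        Real.log_div (ne_of_gt ha0) (ne_of_gt hb0)
      rw [h1, h2, h3]; ring
    rw [key]
    have h4 : 0 ≤ Real.log (a/c) := Real.log_nonneg ((one_le_div hc).2 (by linarith))
    have h5 : 0 ≤ Real.log (a/b) := Real.log_nonneg ((one_le_div hb0).2 hab)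
    have h6 : 0 ≤ a - b := by linarith
    have h7 : 0 ≤ b - c := by linarith
    positivity

lemma phi_diff_le {c b a : ℝ} (hc : 0 < c) (hb : 0 ≤ b) (hab : b ≤ a) (hca : c < a) :
    (a - c) * Real.log (max 1 (a/c)) - (b - c) * Real.log (max 1 (b/c))
      ≤ (a - b) * (Real.log (a/c) + 1 - c/a) := by
  have ha0 : 0 < a := lt_trans hc hca
  have hlog_a : 0 ≤ Real.log (a/c) := Real.log_nonneg ((one_le_div hc).2 hca.le)
  have hca' : 0 ≤ 1 - c/a := by
    rw [sub_nonneg, div_le_one ha0]; exact hca.le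
  rcases le_or_gt b c with hbc | hbc
  · rw [phi_zero hc hb hbc, phi_pos_rw hc hca]
    have h1 : a - c ≤ a - b := by linarith
    have h2 : (a-c) * Real.log (a/c) ≤ (a-b) * Real.log (a/c) :=
      mul_le_mul_of_nonneg_right h1 hlog_a
    nlinarith [mul_nonneg (show (0:ℝ) ≤ a - b by linarith) hca']
  · rw [phi_pos_rw hc hca, phi_pos_rw hc hbc]
    have hb0 : 0 < b := lt_trans hc hbc
    have key : (a - c) * Real.log (a/c) - (b - c) * Real.log (b/c)
        = (a - b) * Real.log (a/c) + (b - c) * Real.log (a/b) := by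
      have h1 : Real.log (a/c) = Real.log a - Real.log c :=
        Real.log_div (ne_of_gt ha0) (ne_of_gt hc)
      have h2 : Real.log (b/c) = Real.log b - Real.log c :=
        Real.log_div (ne_of_gt hb0) (ne_of_gt hc)
      have h3 : Real.log (a/b) = Real.log a - Real.log b :=
        Real.log_div (ne_of_gt ha0) (ne_of_gt hb0)
      rw [h1, h2, h3]; ring
    rw [key]
    have h4 : Real.log (a/b) ≤ a/b - 1 := Real.log_le_sub_one_of_pos (by positivity)
    have h5 : (b - c) * Real.log (a/b) ≤ (b - c) * (a/b - 1) :=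
      mul_le_mul_of_nonneg_left h4 (by linarith)
    have h6 : (b - c) * (a/b - 1) = (a - b) * (1 - c/b) := by
      field_simp
    have h7 : 1 - c/b ≤ 1 - c/a := by
      have : c/a ≤ c/b := div_le_div_of_nonneg_left hc.le hb0 hab
      linarith
    have h8 : (a - b) * (1 - c/b) ≤ (a - b) * (1 - c/a) :=
      mul_le_mul_of_nonneg_left h7 (by linarith)
    nlinarith [h5, h6, h8]

lemma hasDerivAt_g {p τ t : ℝ} (hτ : 0 < τ) (htτ : 0 < t + τ) (hp : 0 ≤ p) :
    HasDerivAt (fun s : ℝ =>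
        (p - Real.exp 1/4 * (s+τ)) * Real.log (max 1 (p / (Real.exp 1/4 * (s+τ)))) - s/τ)
      (-(1/τ + Real.exp 1/4 * Real.log (max 1 (p / (Real.exp 1/4 * (t+τ))))
          + max (p - Real.exp 1/4 * (t+τ)) 0 / (t+τ))) t := by
  set A : ℝ := Real.exp 1/4 with hAdef
  have hA : 0 < A := by positivity
  set c : ℝ := A * (t+τ) with hcdef
  have hc : 0 < c := by positivity
  have hucont : Continuous fun s : ℝ => A * (s + τ) := by continuity
  have hdiv : HasDerivAt (fun s : ℝ => s/τ) (1/τ) t := by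
    simpa using (hasDerivAt_id t).div_const τ
  rcases lt_trichotomy p c with hpc | hpc | hpc
  · -- p < c
    have hev : ∀ᶠ s in 𝓝 t, p < A * (s + τ) := by
      have : ContinuousAt (fun s : ℝ => A * (s + τ)) t := hucont.continuousAt
      exact this.eventually_const_lt hpc
    have heq : (fun s : ℝ =>
        (p - A * (s+τ)) * Real.log (max 1 (p / (A * (s+τ)))) - s/τ) =ᶠ[𝓝 t]
        (fun s : ℝ => 0 - s/τ) := by
      filter_upwards [hev] with s hs
      have hu : 0 < A * (s+τ) := lt_of_le_of_lt hp hs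
      have : max 1 (p / (A * (s+τ))) = 1 := max_eq_left ((div_le_one hu).2 hs.le)
      rw [this, Real.log_one, mul_zero]
    have hder : HasDerivAt (fun s : ℝ => 0 - s/τ) (0 - 1/τ) t := (hasDerivAt_const t 0).fun_sub hdiv
    have := heq.hasDerivAt_iff.2 hder
    refine this.congr_deriv (Eq.symm ?_)
    have h1 : max 1 (p/c) = 1 := max_eq_left ((div_le_one hc).2 hpc.le)
    have h2 : max (p - c) 0 = 0 := max_eq_right (by linarith)
    rw [h1, h2, Real.log_one]
    ring
  · -- p = c
    have hψ : HasDerivAt (fun s : ℝ =>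
        (p - A * (s+τ)) * Real.log (max 1 (p / (A * (s+τ))))) 0 t := by
      rw [hasDerivAt_iff_isLittleO]
      have hψt : (p - A * (t+τ)) * Real.log (max 1 (p / (A * (t+τ)))) = 0 := by
        rw [← hcdef, ← hpc]; simp
      have hbig : (fun s : ℝ => (p - A * (s+τ)) * Real.log (max 1 (p / (A * (s+τ)))))
          =O[𝓝 t] fun s => (s - t)^2 := by
        rw [isBigO_iff]
        refine ⟨2*A^2/c, ?_⟩
        have hhalf : c/2 < A * (t + τ) := by rw [← hcdef]; linarith
        have hev : ∀ᶠ s in 𝓝 t, c/2 < A * (s + τ) :=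
          hucont.continuousAt.eventually_const_lt hhalf
        filter_upwards [hev] with s hs
        have hu : 0 < A * (s+τ) := lt_trans (by positivity) hs
        rcases le_or_gt p (A * (s+τ)) with h | h
        · have : max 1 (p / (A * (s+τ))) = 1 := max_eq_left ((div_le_one hu).2 h)
          rw [this, Real.log_one, mul_zero]
          simp
          positivity
        · have hmax : max 1 (p / (A * (s+τ))) = p / (A * (s+τ)) :=
            max_eq_right ((one_le_div hu).2 h.le)
          rw [hmax]
          have hlog_le : Real.log (p / (A * (s+τ))) ≤ p / (A * (s+τ)) - 1 :=
            Real.log_le_sub_one_of_pos (div_pos (by rw [hpc]; exact hc) hu)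
          have hlog_nn : 0 ≤ Real.log (p / (A * (s+τ))) :=
            Real.log_nonneg ((one_le_div hu).2 h.le)
          have hval : (p - A * (s+τ)) * Real.log (max 1 (p / (A * (s+τ)))) ≤
              (p - A*(s+τ))^2 / (A * (s+τ)) := by
            rw [hmax]
            have h1 : p / (A * (s+τ)) - 1 = (p - A*(s+τ))/(A*(s+τ)) := by
                rw [eq_div_iff hu.ne', sub_mul, div_mul_cancel₀ _ hu.ne', one_mul]
            calc (p - A * (s+τ)) * Real.log (p / (A * (s+τ)))
                ≤ (p - A * (s+τ)) * ((p - A*(s+τ))/(A*(s+τ))) := by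
                  rw [← h1]; exact mul_le_mul_of_nonneg_left hlog_le (by linarith)
              _ = (p - A*(s+τ))^2 / (A * (s+τ)) := by ring
          have hnn : 0 ≤ (p - A * (s+τ)) * Real.log (p / (A * (s+τ))) :=
            mul_nonneg (by linarith) hlog_nn
          rw [Real.norm_eq_abs, abs_of_nonneg hnn, Real.norm_eq_abs]
          have hpAst : p - A*(s+τ) = A * (t - s) := by
            rw [hpc, hcdef]; ring
          have hub : (p - A*(s+τ))^2 / (A * (s+τ)) ≤ 2*A^2/c * (s-t)^2 := by
            rw [hpAst]
            have h2 : (A*(t-s))^2 = A^2 * (s-t)^2 := by ring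
            rw [h2]
            rw [div_le_iff₀ hu]
            have h3 : c/2 * (2*A^2/c * (s-t)^2) = A^2 * (s-t)^2 := by
              field_simp
            calc A^2 * (s-t)^2 = c/2 * (2*A^2/c * (s-t)^2) := h3.symm
              _ ≤ (2*A^2/c * (s-t)^2) * (A*(s+τ)) := by
                  rw [mul_comm (c/2)]
                  apply mul_le_mul_of_nonneg_left hs.le (by positivity)
          calc (p - A * (s+τ)) * Real.log (p / (A * (s+τ)))
              ≤ (p - A*(s+τ))^2 / (A * (s+τ)) := by rw [hmax] at hval; exact hval
            _ ≤ 2*A^2/c * (s-t)^2 := hub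
            _ ≤ 2*A^2/c * |(s-t)^2| := by
                apply mul_le_mul_of_nonneg_left (le_abs_self _) (by positivity)
      have hlit : (fun s : ℝ => (s - t)^2) =o[𝓝 t] fun s => s - t := by
        rw [isLittleO_iff]
        intro C hC
        have hball : ∀ᶠ s in 𝓝 t, |s - t| ≤ C := by
          have := Metric.ball_mem_nhds t hC
          filter_upwards [this] with s hs
          rw [Metric.mem_ball, Real.dist_eq] at hs
          exact hs.le
        filter_upwards [hball] with s hs
        rw [Real.norm_eq_abs, Real.norm_eq_abs, abs_of_nonneg (sq_nonneg (s-t))]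
        nlinarith [abs_nonneg (s-t), sq_abs (s-t), hs]
      have := hbig.trans_isLittleO hlit
      simpa [hψt] using this
    have := hψ.fun_sub hdiv
    refine this.congr_deriv (Eq.symm ?_)
    have hpc' : p/c = 1 := by rw [hpc]; field_simp
    have h1 : max 1 (p/c) = 1 := by rw [hpc']; simp
    have h2 : max (p - c) 0 = 0 := by rw [hpc]; simp
    rw [h1, h2, Real.log_one]
    ring
  · -- p > c
    have hp0 : 0 < p := lt_trans hc hpc
    have hev : ∀ᶠ s in 𝓝 t, A * (s + τ) < p ∧ 0 < A * (s+τ) := by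
      have h1 : ∀ᶠ s in 𝓝 t, A * (s + τ) < p :=
        hucont.continuousAt.eventually_lt_const hpc
      have hpos0 : (0:ℝ) < A * (t+τ) := by positivity
      have h2 : ∀ᶠ s in 𝓝 t, (0:ℝ) < A * (s+τ) :=
        hucont.continuousAt.eventually_const_lt hpos0
      exact h1.and h2
    have heq : (fun s : ℝ =>
        (p - A * (s+τ)) * Real.log (max 1 (p / (A * (s+τ)))) - s/τ) =ᶠ[𝓝 t]
        (fun s : ℝ => (p - A * (s+τ)) * (Real.log p - Real.log (A * (s+τ))) - s/τ) := by
      filter_upwards [hev] with s ⟨hs1, hs2⟩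
      have hmax : max 1 (p / (A * (s+τ))) = p / (A * (s+τ)) :=
        max_eq_right ((one_le_div hs2).2 hs1.le)
      rw [hmax, Real.log_div (ne_of_gt hp0) (ne_of_gt hs2)]
    have hu : HasDerivAt (fun s : ℝ => A * (s+τ)) A t := by
      have := ((hasDerivAt_id t).add_const τ).const_mul A
      simpa using this
    have hlogu : HasDerivAt (fun s : ℝ => Real.log (A * (s+τ))) (A/c) t := by
      have := hu.log (ne_of_gt hc)
      simpa [← hcdef] using this
    have hf1 : HasDerivAt (fun s : ℝ => p - A * (s+τ)) (-A) t := hu.const_sub p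
    have hf2 : HasDerivAt (fun s : ℝ => Real.log p - Real.log (A * (s+τ))) (-(A/c)) t :=
      hlogu.const_sub (Real.log p)
    have hprod := hf1.fun_mul hf2
    have hder := hprod.fun_sub hdiv
    have := heq.hasDerivAt_iff.2 hder
    refine this.congr_deriv (Eq.symm ?_)
    have h1 : max 1 (p/c) = p/c := max_eq_right ((one_le_div hc).2 hpc.le)
    have h2 : max (p - c) 0 = p - c := max_eq_left (by linarith)
    rw [h1, h2, Real.log_div (ne_of_gt hp0) (ne_of_gt hc)]
    have h3 : A/c = 1/(t+τ) := by
      rw [hcdef]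
      field_simp
    have h4 : (p - c)/(t+τ) = (p-c) * (A/c) := by
      rw [h3]; ring
    rw [h4]
    ring

lemma lhs_eq (a b : ℝ) :
    (Real.exp a - Real.exp b)^2 / (4 * Real.exp a * Real.exp b)
      = (Real.cosh (a - b) - 1)/2 := by
  rw [Real.cosh_eq]
  have h1 : Real.exp (a-b) = Real.exp a / Real.exp b := Real.exp_sub a b
  have h2 : Real.exp (-(a-b)) = Real.exp b / Real.exp a := by
    rw [show -(a-b) = b - a by ring, Real.exp_sub]
  rw [h1, h2]
  have ea := Real.exp_pos a
  have eb := Real.exp_pos b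
  field_simp
  ring

set_option maxHeartbeats 1000000 in
/-- The function
h(t,z) = exp{(ρ(z) − (e/4)(t+τ)) log(max(1, ρ(z)/((e/4)(t+τ)))) − t/τ}
satisfies the key inequality of the Integral Maximum Principle. -/
theorem h_out_in_F (V : Type*) (adj : V → V → Prop) (dν : V → V → ℝ) (ρ : V → ℝ) (τ : ℝ)
    (hτ : 0 < τ)
    (hρnn : ∀ x, 0 ≤ ρ x) (hdnn : ∀ x y, 0 ≤ dν x y)
    (hlip : ∀ x y, adj x y → |ρ x - ρ y| ≤ dν x y)
    (hd1 : ∀ x y, adj x y → dν x y ≤ 1) :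
    ∀ t : ℝ, 0 ≤ t → ∀ y z, adj y z →
      (fun h : ℝ → V → ℝ =>
        |h t y - h t z| ^ 2 / (4 * h t y * h t z) ≤
          - dν y z ^ 2 * deriv (fun s => Real.log (h s y)) t)
      (fun t w => Real.exp ((ρ w - Real.exp 1 / 4 * (t + τ)) *
          Real.log (max 1 (ρ w / (Real.exp 1 / 4 * (t + τ)))) - t / τ)) := by
  intro t ht y z hadj
  simp only [Real.log_exp]
  have htτ : 0 < t + τ := by linarith
  have hc : 0 < Real.exp 1 / 4 * (t + τ) := by positivity
  set c : ℝ := Real.exp 1 / 4 * (t + τ) with hcdef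
  set p : ℝ := ρ y with hpdef
  set q : ℝ := ρ z with hqdef
  set ε : ℝ := dν y z with hεdef
  have hp0 : 0 ≤ p := hρnn y
  have hq0 : 0 ≤ q := hρnn z
  have hε0 : 0 ≤ ε := hdnn y z
  have hε1 : ε ≤ 1 := hd1 y z hadj
  have hεpq : |p - q| ≤ ε := hlip y z hadj
  -- rewrite the derivative
  have hD := (hasDerivAt_g hτ htτ hp0).deriv
  rw [hD]
  -- rewrite the LHS
  rw [sq_abs, lhs_eq]
  have hdiff : (p - c) * Real.log (max 1 (p / c)) - t / τ -
      ((q - c) * Real.log (max 1 (q / c)) - t / τ)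
      = (p - c) * Real.log (max 1 (p / c)) - (q - c) * Real.log (max 1 (q / c)) := by ring
  rw [hdiff]
  set d : ℝ := (p - c) * Real.log (max 1 (p / c)) - (q - c) * Real.log (max 1 (q / c)) with hddef
  -- RHS simplification
  have hL0 : 0 ≤ Real.log (max 1 (p / c)) :=
    Real.log_nonneg (le_max_left 1 _)
  have hP0 : 0 ≤ max (p - c) 0 := le_max_right _ _
  have hRHS : - ε ^ 2 * -(1/τ + Real.exp 1 / 4 * Real.log (max 1 (p / c))
      + max (p - c) 0 / (t + τ))
      = ε^2 * (1/τ + Real.exp 1 / 4 * Real.log (max 1 (p / c)) + max (p - c) 0 / (t + τ)) := by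
    ring
  rw [hRHS]
  have hXnn : 0 ≤ 1/τ + Real.exp 1 / 4 * Real.log (max 1 (p / c)) + max (p - c) 0 / (t + τ) := by
    have : 0 < 1/τ := by positivity
    have h2 : 0 ≤ Real.exp 1 / 4 * Real.log (max 1 (p / c)) := by positivity
    have h3 : 0 ≤ max (p - c) 0 / (t + τ) := by positivity
    linarith
  rcases le_or_gt (max p q) c with hm | hm
  · -- both small: d = 0
    have h1 : d = 0 := by
      rw [hddef, phi_zero hc hp0 (le_trans (le_max_left p q) hm),
        phi_zero hc hq0 (le_trans (le_max_right p q) hm)]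
      ring
    rw [h1]
    simp [Real.cosh_zero]
    positivity
  · -- main branch
    have hMc : c < p + 1 := by
      have hqp : q ≤ p + 1 := by
        have : q - p ≤ |p - q| := by rw [abs_sub_comm]; exact le_abs_self _
        linarith
      have : max p q ≤ p + 1 := max_le (by linarith) hqp
      linarith
    have hM0 : (0:ℝ) < p + 1 := by linarith
    set Y : ℝ := Real.log ((p+1)/c) + 1 - c/(p+1) with hYdef
    have hY0 : 0 ≤ Y := by
      have h1 : 0 ≤ Real.log ((p+1)/c) := Real.log_nonneg ((one_le_div hc).2 hMc.le)
      have h2 : c/(p+1) ≤ 1 := (div_le_one hM0).2 hMc.le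
      rw [hYdef]; linarith
    -- the slope bound
    have hslope : ∀ a : ℝ, c < a → a ≤ p + 1 →
        Real.log (a/c) + 1 - c/a ≤ Y := by
      intro a hca haM
      have ha0 : 0 < a := lt_trans hc hca
      have h1 : Real.log (a/c) ≤ Real.log ((p+1)/c) := by
        apply Real.log_le_log (by positivity)
        gcongr
      have h2 : c/(p+1) ≤ c/a := div_le_div_of_nonneg_left hc.le ha0 haM
      rw [hYdef]; linarith
    have hdY : |d| ≤ ε * Y := by
      rcases le_total q p with hqp | hpq
      · -- p is the max
        have hcp : c < p := by
          have : max p q = p := max_eq_left hqp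
          rwa [this] at hm
        have hnn := phi_diff_nonneg hc hq0 hqp (c := c)
        have hub := phi_diff_le hc hq0 hqp hcp
        rw [hddef, abs_of_nonneg hnn]
        have hslope_p := hslope p hcp (by linarith)
        have hpq' : p - q ≤ ε := by
          have : p - q ≤ |p - q| := le_abs_self _
          linarith
        have hY_p : 0 ≤ Real.log (p/c) + 1 - c/p := by
          have h1 : 0 ≤ Real.log (p/c) := Real.log_nonneg ((one_le_div hc).2 hcp.le)
          have h2 : c/p ≤ 1 := (div_le_one (lt_trans hc hcp)).2 hcp.le
          linarith
        calc (p - c) * Real.log (max 1 (p / c)) - (q - c) * Real.log (max 1 (q / c))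
            ≤ (p - q) * (Real.log (p/c) + 1 - c/p) := hub
          _ ≤ ε * (Real.log (p/c) + 1 - c/p) := mul_le_mul_of_nonneg_right hpq' hY_p
          _ ≤ ε * Y := mul_le_mul_of_nonneg_left (hslope_p) hε0
      · -- q is the max
        have hcq : c < q := by
          have : max p q = q := max_eq_right hpq
          rwa [this] at hm
        have hnn := phi_diff_nonneg hc hp0 hpq (c := c)
        have hub := phi_diff_le hc hp0 hpq hcq
        have habs : |d| = (q - c) * Real.log (max 1 (q / c)) - (p - c) * Real.log (max 1 (p / c)) := by
          rw [hddef, abs_of_nonpos (by linarith)]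
          ring
        rw [habs]
        have hqM : q ≤ p + 1 := by
          have : q - p ≤ |p - q| := by rw [abs_sub_comm]; exact le_abs_self _
          linarith
        have hslope_q := hslope q hcq hqM
        have hqp' : q - p ≤ ε := by
          have : q - p ≤ |p - q| := by rw [abs_sub_comm]; exact le_abs_self _
          linarith
        have hY_q : 0 ≤ Real.log (q/c) + 1 - c/q := by
          have h1 : 0 ≤ Real.log (q/c) := Real.log_nonneg ((one_le_div hc).2 hcq.le)
          have h2 : c/q ≤ 1 := (div_le_one (lt_trans hc hcq)).2 hcq.le
          linarith
        calc (q - c) * Real.log (max 1 (q / c)) - (p - c) * Real.log (max 1 (p / c))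
            ≤ (q - p) * (Real.log (q/c) + 1 - c/q) := hub
          _ ≤ ε * (Real.log (q/c) + 1 - c/q) := mul_le_mul_of_nonneg_right hqp' hY_q
          _ ≤ ε * Y := mul_le_mul_of_nonneg_left (hslope_q) hε0
    -- chain of inequalities
    have step1 : Real.cosh d ≤ Real.cosh (ε * Y) := by
      apply Real.cosh_le_cosh.2
      rw [abs_of_nonneg (by positivity : (0:ℝ) ≤ ε * Y)]
      exact hdY
    have step2 : Real.cosh (ε * Y) - 1 ≤ ε^2 * (Real.cosh Y - 1) :=
      cosh_sub_one_smul hY0 hε0 hε1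
    have step3 : Real.cosh Y - 1 ≤
        (Real.exp 1/(2*c)) * (1 + c * Real.log (max 1 (p/c)) + max (p - c) 0) :=
      core hc hp0 hMc
    -- identify the pieces
    have hkey : (Real.exp 1/(2*c)) * (1 + c * Real.log (max 1 (p/c)) + max (p - c) 0)
        ≤ 2 * (1/τ + Real.exp 1 / 4 * Real.log (max 1 (p / c)) + max (p - c) 0 / (t + τ)) := by
      have hEq : (Real.exp 1/(2*c)) * (1 + c * Real.log (max 1 (p/c)) + max (p - c) 0)
          = 2*(1/(t+τ) + Real.exp 1/4 * Real.log (max 1 (p/c)) + max (p - c) 0/(t+τ)) := by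
        rw [hcdef]
        field_simp
        ring
      have h4 : 1/(t+τ) ≤ 1/τ :=
        one_div_le_one_div_of_le hτ (by linarith)
      rw [hEq]
      linarith
    have hcoshY1 : 0 ≤ Real.cosh Y - 1 := by
      have := Real.one_le_cosh Y
      linarith
    have step4 : ε^2 * (Real.cosh Y - 1) ≤
        ε^2 * (2 * (1/τ + Real.exp 1 / 4 * Real.log (max 1 (p / c)) + max (p - c) 0 / (t + τ))) := by
      exact mul_le_mul_of_nonneg_left (step3.trans hkey) (sq_nonneg ε)
    nlinarith [step1, step2, step4]
end
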